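/- Assume (H1) and (H2). Every parabolic periodic point of F in Γ belongs to H(P,F) ∩ H(Q,F). In particular, if F has a parabolic periodic point then H(P,F) ∩ H(Q,F) ≠ ∅. -/

import Mathlib

open Set MeasureTheory Filter

namespace DGR

/-- The two-sided sequence space `Σ₂ = {0,1}^ℤ`. -/
abbrev Seq2 := ℤ → Fin 2

/-- The left shift map `σ`. -/
def shift (ξ : Seq2) : Seq2 := fun n => ξ (n + 1)

/-- The constant sequence `0^ℤ`. -/
def zeroSeq : Seq2 := fun _ => 0

/-- The skew-product `F̃(ξ,x) = (σ ξ, f̃_{ξ₀} x)`. -/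
def F (f0 f1 : ℝ → ℝ) (p : Seq2 × ℝ) : Seq2 × ℝ :=
  (shift p.1, if p.1 0 = 0 then f0 p.2 else f1 p.2)

/-- The fixed point `P = (0^ℤ, 1)`. -/
def Pfix : Seq2 × ℝ := (zeroSeq, 1)

/-- The fixed point `Q = (0^ℤ, 0)`. -/
def Qfix : Seq2 × ℝ := (zeroSeq, 0)

/-- `f_ξ^n = f_{ξ_{n-1}} ∘ ⋯ ∘ f_{ξ₀}`. -/
def fIter (f0 f1 : ℝ → ℝ) (ξ : Seq2) : ℕ → ℝ → ℝ
  | 0, x => x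
  | n + 1, x => (if ξ (n : ℤ) = 0 then f0 else f1) (fIter f0 f1 ξ n x)

/-- The derivative `(f_ξ^n)'(x)` (chain rule product). -/
def fIterDeriv (f0 f1 df0 df1 : ℝ → ℝ) (ξ : Seq2) : ℕ → ℝ → ℝ
  | 0, _ => 1
  | n + 1, x => fIterDeriv f0 f1 df0 df1 ξ n x *
      (if ξ (n : ℤ) = 0 then df0 else df1) (fIter f0 f1 ξ n x)

/-- `ξ⁺` is admissible for `x`: all forward iterates are defined and stay in `[0,1]`. -/
def forwardAdmissible (f0 f1 : ℝ → ℝ) (d : ℝ) (ξ : Seq2) (x : ℝ) : Prop :=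
  ∀ n : ℕ, fIter f0 f1 ξ n x ∈ Icc (0 : ℝ) 1 ∧ (ξ (n : ℤ) = 1 → d ≤ fIter f0 f1 ξ n x)

/-- `ξ⁻` is admissible for `x`: there is a backward orbit through `x` staying in `[0,1]`. -/
def backwardAdmissible (f0 f1 : ℝ → ℝ) (d : ℝ) (ξ : Seq2) (x : ℝ) : Prop :=
  ∃ y : ℕ → ℝ, y 0 = x ∧ ∀ m : ℕ,
    y m ∈ Icc (0 : ℝ) 1 ∧
    (ξ (-(m : ℤ) - 1) = 0 → f0 (y (m + 1)) = y m) ∧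
    (ξ (-(m : ℤ) - 1) = 1 → d ≤ y (m + 1) ∧ f1 (y (m + 1)) = y m)

/-- The maximal invariant set `Γ` of `F̃` in `Σ₂ × [0,1]`. -/
def Gamma (f0 f1 : ℝ → ℝ) (d : ℝ) : Set (Seq2 × ℝ) :=
  { p | forwardAdmissible f0 f1 d p.1 p.2 ∧ backwardAdmissible f0 f1 d p.1 p.2 }

/-- The subshift `Σ = π(Γ)` of admissible sequences. -/
def SigmaA (f0 f1 : ℝ → ℝ) (d : ℝ) : Set Seq2 := Prod.fst '' Gamma f0 f1 d

/-- `I_{ξ⁺}`. -/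
def Iplus (f0 f1 : ℝ → ℝ) (d : ℝ) (ξ : Seq2) : Set ℝ := { x | forwardAdmissible f0 f1 d ξ x }

/-- `I_{ξ⁻}`. -/
def Iminus (f0 f1 : ℝ → ℝ) (d : ℝ) (ξ : Seq2) : Set ℝ := { x | backwardAdmissible f0 f1 d ξ x }

/-- `I_ξ = I_{ξ⁺} ∩ I_{ξ⁻}`, the spine over `ξ`. -/
def Ifiber (f0 f1 : ℝ → ℝ) (d : ℝ) (ξ : Seq2) : Set ℝ := Iplus f0 f1 d ξ ∩ Iminus f0 f1 d ξ

/-- `x_{ξ⁺}`, the left endpoint of `I_{ξ⁺} = [x_{ξ⁺}, 1]`. -/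
noncomputable def xPlus (f0 f1 : ℝ → ℝ) (d : ℝ) (ξ : Seq2) : ℝ := sInf (Iplus f0 f1 d ξ)

/-- `x_{ξ⁻}`, the right endpoint of `I_{ξ⁻} = [0, x_{ξ⁻}]`. -/
noncomputable def xMinus (f0 f1 : ℝ → ℝ) (d : ℝ) (ξ : Seq2) : ℝ := sSup (Iminus f0 f1 d ξ)

/-- Hypothesis (H1), stated for strictly increasing differentiable extensions
`f0, f1 : ℝ → ℝ` with derivative functions `df0, df1`, whose restrictions to
`[0,1]` resp. `[d,1]` are the fiber maps. -/
structure H1 (f0 f1 df0 df1 : ℝ → ℝ) (d : ℝ) : Prop where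
  d_mem : d ∈ Ioo (0 : ℝ) 1
  mono0 : StrictMono f0
  mono1 : StrictMono f1
  hasDeriv0 : ∀ x, HasDerivAt f0 (df0 x) x
  hasDeriv1 : ∀ x, HasDerivAt f1 (df1 x) x
  contDeriv0 : ContinuousOn df0 (Icc 0 1)
  contDeriv1 : ContinuousOn df1 (Icc d 1)
  maps0 : MapsTo f0 (Icc 0 1) (Icc 0 1)
  surj0 : SurjOn f0 (Icc 0 1) (Icc 0 1)
  maps1 : MapsTo f1 (Icc d 1) (Icc 0 1)
  deriv0_zero : 1 < df0 0
  deriv0_one : df0 1 ∈ Ioo (0 : ℝ) 1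
  f0_above : ∀ x ∈ Ioo (0 : ℝ) 1, x < f0 x
  f1_d : f1 d = 0
  f1_below : ∀ x ∈ Icc d 1, f1 x < x
  deriv1_one : 0 < df1 1

/-- Hypothesis (H2): `f₀'` strictly decreasing, `f₁'` nonincreasing. -/
def H2 (df0 df1 : ℝ → ℝ) (d : ℝ) : Prop :=
  StrictAntiOn df0 (Icc 0 1) ∧ AntitoneOn df1 (Icc d 1)

/-- Hypothesis (H2+) with constant `M`. -/
def H2plus (df0 df1 : ℝ → ℝ) (d M : ℝ) : Prop :=
  1 < M ∧
  (∀ x ∈ Icc (0 : ℝ) 1, ∀ y ∈ Icc (0 : ℝ) 1, x < y →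
    M⁻¹ * (y - x) ≤ Real.log (df0 x) - Real.log (df0 y) ∧
      Real.log (df0 x) - Real.log (df0 y) ≤ M * (y - x)) ∧
  (∀ x ∈ Icc d 1, ∀ y ∈ Icc d 1, x < y →
    M⁻¹ * (y - x) ≤ Real.log (df1 x) - Real.log (df1 y) ∧
      Real.log (df1 x) - Real.log (df1 y) ≤ M * (y - x))

/-- The fiber Lyapunov exponent `χ(μ) = ∫ log f'_{ξ₀}(x) dμ(ξ,x)`. -/
noncomputable def lyap (df0 df1 : ℝ → ℝ) (μ : Measure (Seq2 × ℝ)) : ℝ :=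
  ∫ p, Real.log ((if p.1 0 = 0 then df0 else df1) p.2) ∂μ

/-- An `F`-invariant Borel probability measure on `Γ`. -/
def IsInvGamma (f0 f1 : ℝ → ℝ) (d : ℝ) (μ : Measure (Seq2 × ℝ)) : Prop :=
  IsProbabilityMeasure μ ∧ μ (Gamma f0 f1 d) = 1 ∧ μ.map (F f0 f1) = μ

/-- An ergodic `F`-invariant Borel probability measure on `Γ`. -/
def IsErgGamma (f0 f1 : ℝ → ℝ) (d : ℝ) (μ : Measure (Seq2 × ℝ)) : Prop :=
  IsInvGamma f0 f1 d μ ∧ Ergodic (F f0 f1) μ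

/-- A `σ`-invariant Borel probability measure on `Σ`. -/
def IsInvSigma (f0 f1 : ℝ → ℝ) (d : ℝ) (ν : Measure Seq2) : Prop :=
  IsProbabilityMeasure ν ∧ ν (SigmaA f0 f1 d) = 1 ∧ ν.map shift = ν

/-- An ergodic `σ`-invariant Borel probability measure on `Σ`. -/
def IsErgSigma (f0 f1 : ℝ → ℝ) (d : ℝ) (ν : Measure Seq2) : Prop :=
  IsInvSigma f0 f1 d ν ∧ Ergodic shift ν

/-- `f_{[w]} = f_{w_{n-1}} ∘ ⋯ ∘ f_{w_0}` for a finite word `w`. -/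
def fWord (f0 f1 : ℝ → ℝ) : List (Fin 2) → ℝ → ℝ
  | [], x => x
  | i :: w, x => fWord f0 f1 w ((if i = 0 then f0 else f1) x)

/-- The derivative `(f_{[w]})'(x)`. -/
def fWordDeriv (f0 f1 df0 df1 : ℝ → ℝ) : List (Fin 2) → ℝ → ℝ
  | [], _ => 1
  | i :: w, x => (if i = 0 then df0 x else df1 x) *
      fWordDeriv f0 f1 df0 df1 w ((if i = 0 then f0 else f1) x)

/-- The word `w` is (forward) admissible at `x`. -/
def wordAdm (f0 f1 : ℝ → ℝ) (d : ℝ) : List (Fin 2) → ℝ → Prop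
  | [], x => x ∈ Icc (0 : ℝ) 1
  | i :: w, x => x ∈ Icc (0 : ℝ) 1 ∧ (i = 1 → d ≤ x) ∧
      wordAdm f0 f1 d w ((if i = 0 then f0 else f1) x)

/-- The admissibility interval `I_{[w]}`. -/
def IWord (f0 f1 : ℝ → ℝ) (d : ℝ) (w : List (Fin 2)) : Set ℝ := { x | wordAdm f0 f1 d w x }

/-- The point `a_{[w]}`, left endpoint of `I_{[w]} = [a_{[w]}, 1]`. -/
noncomputable def aWord (f0 f1 : ℝ → ℝ) (d : ℝ) (w : List (Fin 2)) : ℝ := sInf (IWord f0 f1 d w)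

/-- The periodic sequence `w^ℤ`. -/
def perSeq (w : List (Fin 2)) : Seq2 := fun n => w.getD (n % (w.length : ℤ)).toNat 0

/-- The finite word `(ξ_a, ξ_{a+1}, …, ξ_{a+n-1})` read off a sequence. -/
def seqWord (ξ : Seq2) (a : ℤ) (n : ℕ) : List (Fin 2) := List.ofFn fun i : Fin n => ξ (a + (i.1 : ℤ))

/-- `X` is a periodic point of `F` in `Γ` with period `n ≥ 1`. -/
def IsPerPt (f0 f1 : ℝ → ℝ) (d : ℝ) (X : Seq2 × ℝ) (n : ℕ) : Prop :=
  X ∈ Gamma f0 f1 d ∧ 1 ≤ n ∧ (F f0 f1)^[n] X = X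

/-- Hyperbolic periodic point (the multiplier is different from 1). -/
def IsHypPerPt (f0 f1 df0 df1 : ℝ → ℝ) (d : ℝ) (X : Seq2 × ℝ) : Prop :=
  ∃ n, IsPerPt f0 f1 d X n ∧ fIterDeriv f0 f1 df0 df1 X.1 n X.2 ≠ 1

/-- Hyperbolic periodic point of expanding type. -/
def IsExpPerPt (f0 f1 df0 df1 : ℝ → ℝ) (d : ℝ) (X : Seq2 × ℝ) : Prop :=
  ∃ n, IsPerPt f0 f1 d X n ∧ 1 < fIterDeriv f0 f1 df0 df1 X.1 n X.2

/-- Hyperbolic periodic point of contracting type. -/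
def IsConPerPt (f0 f1 df0 df1 : ℝ → ℝ) (d : ℝ) (X : Seq2 × ℝ) : Prop :=
  ∃ n, IsPerPt f0 f1 d X n ∧ 0 < fIterDeriv f0 f1 df0 df1 X.1 n X.2 ∧
    fIterDeriv f0 f1 df0 df1 X.1 n X.2 < 1

/-- Parabolic periodic point (multiplier 1). -/
def IsParPerPt (f0 f1 df0 df1 : ℝ → ℝ) (d : ℝ) (X : Seq2 × ℝ) : Prop :=
  ∃ n, IsPerPt f0 f1 d X n ∧ fIterDeriv f0 f1 df0 df1 X.1 n X.2 = 1

/-- The stable set `W^s(R, F)` of a point, for `F : Γ → Γ`. -/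
def Ws (f0 f1 : ℝ → ℝ) (d : ℝ) (R : Seq2 × ℝ) : Set (Seq2 × ℝ) :=
  { X | (∀ k : ℕ, (F f0 f1)^[k] X ∈ Gamma f0 f1 d) ∧
      Tendsto (fun k => (F f0 f1)^[k] X) atTop (nhds R) }

/-- The unstable set `W^u(R, F) = W^s(R, F⁻¹)` of a point, for `F : Γ → Γ`. -/
def Wu (f0 f1 : ℝ → ℝ) (d : ℝ) (R : Seq2 × ℝ) : Set (Seq2 × ℝ) :=
  { X | ∃ Z : ℕ → Seq2 × ℝ, Z 0 = X ∧
      (∀ m : ℕ, Z m ∈ Gamma f0 f1 d ∧ F f0 f1 (Z (m + 1)) = Z m) ∧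
      Tendsto Z atTop (nhds R) }

/-- The stable set of the orbit of `R`. -/
def WsOrbit (f0 f1 : ℝ → ℝ) (d : ℝ) (R : Seq2 × ℝ) : Set (Seq2 × ℝ) :=
  ⋃ j : ℕ, Ws f0 f1 d ((F f0 f1)^[j] R)

/-- The unstable set of the orbit of `R`. -/
def WuOrbit (f0 f1 : ℝ → ℝ) (d : ℝ) (R : Seq2 × ℝ) : Set (Seq2 × ℝ) :=
  ⋃ j : ℕ, Wu f0 f1 d ((F f0 f1)^[j] R)

/-- The homoclinic class `H(R,F)`. -/
def homClass (f0 f1 : ℝ → ℝ) (d : ℝ) (R : Seq2 × ℝ) : Set (Seq2 × ℝ) :=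
  closure (WsOrbit f0 f1 d R ∩ WuOrbit f0 f1 d R)

/-- `R₁` and `R₂` are homoclinically related. -/
def HomRel (f0 f1 : ℝ → ℝ) (d : ℝ) (R₁ R₂ : Seq2 × ℝ) : Prop :=
  (WsOrbit f0 f1 d R₁ ∩ WuOrbit f0 f1 d R₂).Nonempty ∧
  (WuOrbit f0 f1 d R₁ ∩ WsOrbit f0 f1 d R₂).Nonempty

/-- A set is (fiber) hyperbolic of expanding type. -/
def IsHypExpanding (f0 f1 df0 df1 : ℝ → ℝ) (Λ : Set (Seq2 × ℝ)) : Prop :=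
  ∃ C : ℝ, 0 < C ∧ ∃ α : ℝ, 0 < α ∧ ∀ p ∈ Λ, ∀ n : ℕ, 1 ≤ n →
    C * Real.exp (α * n) ≤ fIterDeriv f0 f1 df0 df1 p.1 n p.2

/-- A set is (fiber) hyperbolic of contracting type (backward iterates expand). -/
def IsHypContracting (f0 f1 df0 df1 : ℝ → ℝ) (d : ℝ) (Λ : Set (Seq2 × ℝ)) : Prop :=
  ∃ C : ℝ, 0 < C ∧ ∃ α : ℝ, 0 < α ∧ ∀ p ∈ Λ, ∀ Z : ℕ → Seq2 × ℝ, Z 0 = p →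
    (∀ m : ℕ, Z m ∈ Gamma f0 f1 d ∧ F f0 f1 (Z (m + 1)) = Z m) →
    ∀ n : ℕ, 1 ≤ n → fIterDeriv f0 f1 df0 df1 (Z n).1 n (Z n).2 ≤ C * Real.exp (-(α * n))

/-- The nonwandering set `Ω(Γ, F)` of `F : Γ → Γ`. -/
def nonwandering (f0 f1 : ℝ → ℝ) (d : ℝ) : Set (Seq2 × ℝ) :=
  { X | X ∈ Gamma f0 f1 d ∧ ∀ U : Set (Seq2 × ℝ), IsOpen U → X ∈ U →
      ∃ n : ℕ, 1 ≤ n ∧ ∃ Y ∈ U ∩ Gamma f0 f1 d, (F f0 f1)^[n] Y ∈ U ∩ Gamma f0 f1 d }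

/-- The finite word `w` occurs in the sequence `ξ`. -/
def OccursIn (w : List (Fin 2)) (ξ : Seq2) : Prop :=
  ∃ k : ℤ, ∀ i : ℕ, i < w.length → ξ (k + (i : ℤ)) = w.getD i 0

/-- The set `Σ^het` of heteroclinic admissible sequences. -/
def SigmaHet (f0 f1 : ℝ → ℝ) (d : ℝ) : Set Seq2 :=
  { ξ | ξ ∈ SigmaA f0 f1 d ∧ ∃ k : ℤ, ∃ w : List (Fin 2),
      (∀ m : ℤ, m < k → ξ m = 0) ∧
      (∀ i : ℕ, i < w.length → ξ (k + (i : ℤ)) = w.getD i 0) ∧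
      (∀ m : ℤ, k + (w.length : ℤ) ≤ m → ξ m = 0) ∧
      fWord f0 f1 w 1 = 0 }

/-- `Σ^cod = Σ ∖ Σ^het`. -/
def SigmaCod (f0 f1 : ℝ → ℝ) (d : ℝ) : Set Seq2 := SigmaA f0 f1 d \ SigmaHet f0 f1 d

/-- `Γ^cod = π⁻¹(Σ^cod) ∩ Γ`. -/
def GammaCod (f0 f1 : ℝ → ℝ) (d : ℝ) : Set (Seq2 × ℝ) :=
  { p ∈ Gamma f0 f1 d | p.1 ∈ SigmaCod f0 f1 d }

/-- `Σ^sing`: sequences whose spine is a singleton. -/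
def SigmaSing (f0 f1 : ℝ → ℝ) (d : ℝ) : Set Seq2 :=
  { ξ | ξ ∈ SigmaA f0 f1 d ∧ (Ifiber f0 f1 d ξ).Subsingleton }

/-- `Σ^spine`: sequences whose spine is a nondegenerate interval. -/
def SigmaSpine (f0 f1 : ℝ → ℝ) (d : ℝ) : Set Seq2 :=
  { ξ | ξ ∈ SigmaA f0 f1 d ∧ ¬ (Ifiber f0 f1 d ξ).Subsingleton }

/-- `T` restricted to `S` is topologically transitive. -/
def TransOn {α : Type*} [TopologicalSpace α] (T : α → α) (S : Set α) : Prop :=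
  ∀ U V : Set α, IsOpen U → IsOpen V → (U ∩ S).Nonempty → (V ∩ S).Nonempty →
    ∃ n : ℕ, 1 ≤ n ∧ (T^[n] '' (U ∩ S) ∩ (V ∩ S)).Nonempty

/-- `T` restricted to `S` is topologically mixing. -/
def MixOn {α : Type*} [TopologicalSpace α] (T : α → α) (S : Set α) : Prop :=
  ∀ U V : Set α, IsOpen U → IsOpen V → (U ∩ S).Nonempty → (V ∩ S).Nonempty →
    ∃ N : ℕ, ∀ n : ℕ, N ≤ n → (T^[n] '' (U ∩ S) ∩ (V ∩ S)).Nonempty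

/-- A subshift of finite type: the sequences avoiding a finite list of forbidden words. -/
def IsSFT (S : Set Seq2) : Prop :=
  ∃ Fw : Finset (List (Fin 2)), S = { ξ | ∀ w ∈ Fw, ¬ OccursIn w ξ }

/-- Number of words of length `n` appearing in sequences of `S`. -/
noncomputable def wordCount (S : Set Seq2) (n : ℕ) : ℕ :=
  Nat.card { w : List (Fin 2) // w.length = n ∧ ∃ ξ ∈ S, OccursIn w ξ }

/-- Topological entropy of the shift on a subshift `S`, as exponential growth rate of
the number of words. -/
noncomputable def subshiftEntropy (S : Set Seq2) : ℝ :=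
  Filter.limsup (fun n : ℕ => Real.log (wordCount S n) / n) Filter.atTop

/-- `Λ` is `F`-invariant. -/
def IsInvariantSet (f0 f1 : ℝ → ℝ) (Λ : Set (Seq2 × ℝ)) : Prop := F f0 f1 '' Λ = Λ

/-- `Λ` is locally maximal: it is the set of full orbits inside some neighborhood. -/
def IsLocallyMaximal (f0 f1 : ℝ → ℝ) (Λ : Set (Seq2 × ℝ)) : Prop :=
  ∃ V : Set (Seq2 × ℝ), IsOpen V ∧ Λ ⊆ V ∧
    Λ = { X | ∃ Z : ℤ → Seq2 × ℝ, Z 0 = X ∧ (∀ n : ℤ, Z (n + 1) = F f0 f1 (Z n)) ∧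
      ∀ n : ℤ, Z n ∈ V }

/-- Basic set with uniform fiber expansion. -/
def IsBasicExp (f0 f1 df0 df1 : ℝ → ℝ) (d : ℝ) (Λ : Set (Seq2 × ℝ)) : Prop :=
  Λ ⊆ Gamma f0 f1 d ∧ IsCompact Λ ∧ IsInvariantSet f0 f1 Λ ∧ IsLocallyMaximal f0 f1 Λ ∧
  TransOn (F f0 f1) Λ ∧ IsHypExpanding f0 f1 df0 df1 Λ

/-- Basic set with uniform fiber contraction. -/
def IsBasicCon (f0 f1 df0 df1 : ℝ → ℝ) (d : ℝ) (Λ : Set (Seq2 × ℝ)) : Prop :=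
  Λ ⊆ Gamma f0 f1 d ∧ IsCompact Λ ∧ IsInvariantSet f0 f1 Λ ∧ IsLocallyMaximal f0 f1 Λ ∧
  TransOn (F f0 f1) Λ ∧ IsHypContracting f0 f1 df0 df1 d Λ

/-- The entropy function `𝓗(p) = -p log p - (1-p) log (1-p)`. -/
noncomputable def entH (p : ℝ) : ℝ := -(p * Real.log p) - (1 - p) * Real.log (1 - p)


/-! ## Auxiliary infrastructure -/

/-- Shift by an arbitrary integer. -/
def shiftZ (a : ℤ) (ξ : Seq2) : Seq2 := fun m => ξ (m + a)

lemma shiftZ_apply (a : ℤ) (ξ : Seq2) (m : ℤ) : shiftZ a ξ m = ξ (m + a) := rfl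

lemma shiftZ_shiftZ (a b : ℤ) (ξ : Seq2) : shiftZ a (shiftZ b ξ) = shiftZ (a + b) ξ := by
  funext m; simp [shiftZ, add_assoc]

lemma shiftZ_zero (ξ : Seq2) : shiftZ 0 ξ = ξ := by funext m; simp [shiftZ]

lemma shift_eq_shiftZ (ξ : Seq2) : shift ξ = shiftZ 1 ξ := rfl

section Infra

variable (f0 f1 : ℝ → ℝ)

lemma fIter_succ (ξ : Seq2) (k : ℕ) (v : ℝ) :
    fIter f0 f1 ξ (k + 1) v = (if ξ (k : ℤ) = 0 then f0 else f1) (fIter f0 f1 ξ k v) := rfl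

lemma F_iterate (ζ : Seq2) (v : ℝ) (k : ℕ) :
    (F f0 f1)^[k] (ζ, v) = (shiftZ k ζ, fIter f0 f1 ζ k v) := by
  induction k with
  | zero => simp [shiftZ_zero, fIter]
  | succ k ih =>
      rw [Function.iterate_succ_apply', ih]
      have h0 : (shiftZ (k : ℤ) ζ) 0 = ζ (k : ℤ) := by simp [shiftZ]
      have hs : shift (shiftZ (k : ℤ) ζ) = shiftZ ((k : ℕ) + 1 : ℤ) ζ := by
        funext m; simp only [shift, shiftZ]; ring_nf
      simp only [F, h0, hs, fIter_succ]
      push_cast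
      refine Prod.ext rfl ?_
      by_cases hc : ζ (k : ℤ) = 0 <;> simp [hc]

lemma fIter_add (ζ : Seq2) (a b : ℕ) (v : ℝ) :
    fIter f0 f1 ζ (a + b) v = fIter f0 f1 (shiftZ a ζ) b (fIter f0 f1 ζ a v) := by
  induction b with
  | zero => rfl
  | succ b ih =>
      have : (a + (b + 1)) = (a + b) + 1 := by ring
      rw [this, fIter_succ, fIter_succ, ih]
      have : ζ ((a + b : ℕ) : ℤ) = (shiftZ a ζ) (b : ℤ) := by
        simp [shiftZ]; ring_nf
      rw [this]

lemma fIter_congr {ζ ζ' : Seq2} (k : ℕ) (h : ∀ t : ℕ, t < k → ζ (t : ℤ) = ζ' (t : ℤ)) (v : ℝ) :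
    fIter f0 f1 ζ k v = fIter f0 f1 ζ' k v := by
  induction k with
  | zero => rfl
  | succ k ih =>
      rw [fIter_succ, fIter_succ, ih (fun t ht => h t (Nat.lt_succ_of_lt ht)),
        h k (Nat.lt_succ_self k)]

end Infra

section Basic

variable {f0 f1 df0 df1 : ℝ → ℝ} {d : ℝ}

namespace H1

variable (h1 : H1 f0 f1 df0 df1 d)
include h1

lemma cont0 : Continuous f0 :=
  continuous_iff_continuousAt.2 fun x => (h1.hasDeriv0 x).continuousAt

lemma cont1 : Continuous f1 :=
  continuous_iff_continuousAt.2 fun x => (h1.hasDeriv1 x).continuousAt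

lemma f0_one : f0 1 = 1 := by
  obtain ⟨y, hy, hfy⟩ := h1.surj0 (show (1:ℝ) ∈ Icc (0:ℝ) 1 by simp)
  have h1' : f0 1 ≤ 1 := (h1.maps0 (show (1:ℝ) ∈ Icc (0:ℝ) 1 by simp)).2
  have : (1:ℝ) ≤ y := h1.mono0.le_iff_le.1 (hfy ▸ h1')
  have : y = 1 := le_antisymm hy.2 this
  rw [this] at hfy; exact hfy

lemma f0_zero : f0 0 = 0 := by
  obtain ⟨y, hy, hfy⟩ := h1.surj0 (show (0:ℝ) ∈ Icc (0:ℝ) 1 by simp)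
  have h1' : 0 ≤ f0 0 := (h1.maps0 (show (0:ℝ) ∈ Icc (0:ℝ) 1 by simp)).1
  have : y ≤ 0 := h1.mono0.le_iff_le.1 (by rw [hfy]; exact h1')
  have : y = 0 := le_antisymm this hy.1
  rw [this] at hfy; exact hfy

lemma f0_ge_id (h2 : H2 df0 df1 d) : ∀ x ∈ Icc (0:ℝ) 1, x ≤ f0 x := by
  intro x hx
  rcases eq_or_lt_of_le hx.1 with h|h
  · rw [← h, h1.f0_zero]
  rcases eq_or_lt_of_le hx.2 with h'|h'
  · rw [h', h1.f0_one]
  · exact (h1.f0_above x ⟨h, h'⟩).le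

lemma df0_pos : ∀ x ∈ Icc (0:ℝ) 1, (h2 : H2 df0 df1 d) → 0 < df0 x := by
  intro x hx h2
  rcases eq_or_lt_of_le hx.2 with h|h
  · rw [h]; exact h1.deriv0_one.1
  · exact lt_trans h1.deriv0_one.1 (h2.1 hx ⟨le_trans hx.1 hx.2, le_refl 1⟩ h)

lemma df1_pos (h2 : H2 df0 df1 d) : ∀ x ∈ Icc d 1, 0 < df1 x := by
  intro x hx
  have := h2.2 hx ⟨le_trans hx.1 hx.2, le_refl 1⟩ hx.2
  exact lt_of_lt_of_le h1.deriv1_one this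

lemma f1_one_lt : f1 1 < 1 :=
  h1.f1_below 1 ⟨h1.d_mem.2.le, le_refl 1⟩

lemma f0_neg {x : ℝ} (hx : x ≤ 0) : f0 x ≤ 0 := by
  calc f0 x ≤ f0 0 := h1.mono0.le_iff_le.2 hx
  _ = 0 := h1.f0_zero

lemma f1_neg {x : ℝ} (hx : x ≤ d) : f1 x ≤ 0 := by
  calc f1 x ≤ f1 d := h1.mono1.le_iff_le.2 hx
  _ = 0 := h1.f1_d

lemma f0_fixed {x : ℝ} (hx : x ∈ Icc (0:ℝ) 1) (hfx : f0 x = x) : x = 0 ∨ x = 1 := by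
  rcases eq_or_lt_of_le hx.1 with h|h
  · exact Or.inl h.symm
  rcases eq_or_lt_of_le hx.2 with h'|h'
  · exact Or.inr h'
  · exact absurd hfx (ne_of_gt (h1.f0_above x ⟨h, h'⟩))

/-- forward f0-iterates of a point in (0,1] tend to 1. -/
lemma f0_iter_tendsto_one (h2 : H2 df0 df1 d) {v : ℝ} (hv0 : 0 < v) (hv1 : v ≤ 1) :
    Tendsto (fun k => f0^[k] v) atTop (nhds 1) := by
  have hmem : ∀ k, f0^[k] v ∈ Icc (0:ℝ) 1 := by
    intro k; induction k with
    | zero => exact ⟨hv0.le, hv1⟩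
    | succ k ih => rw [Function.iterate_succ_apply']; exact h1.maps0 ih
  have hmono : Monotone (fun k => f0^[k] v) := by
    apply monotone_nat_of_le_succ
    intro k; rw [Function.iterate_succ_apply']
    exact h1.f0_ge_id h2 _ (hmem k)
  have hbdd : BddAbove (Set.range fun k => f0^[k] v) := ⟨1, by rintro x ⟨k, rfl⟩; exact (hmem k).2⟩
  have hlim := tendsto_atTop_ciSup hmono hbdd
  set L := ⨆ k, f0^[k] v with hL
  have hfix : f0 L = L := by
    have h1' : Tendsto (fun k => f0^[k+1] v) atTop (nhds L) :=
      hlim.comp (tendsto_add_atTop_nat 1)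
    have h2' : Tendsto (fun k => f0 (f0^[k] v)) atTop (nhds (f0 L)) :=
      ((h1.cont0).continuousAt.tendsto).comp hlim
    refine tendsto_nhds_unique ?_ h1'
    refine h2'.congr fun k => ?_
    rw [Function.iterate_succ_apply']
  have hLv : v ≤ L := le_ciSup hbdd 0
  have hL1 : L ≤ 1 := ciSup_le fun k => (hmem k).2
  have : L = 0 ∨ L = 1 := h1.f0_fixed ⟨le_trans hv0.le hLv, hL1⟩ hfix
  rcases this with h|h
  · exact absurd (h ▸ hLv) (not_le.2 hv0)
  · rwa [h] at hlim

end H1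

end Basic

section Analytic

variable {f0 f1 df0 df1 : ℝ → ℝ} {d : ℝ}

lemma fIter_cont (h1 : H1 f0 f1 df0 df1 d) (ζ : Seq2) (k : ℕ) :
    Continuous (fIter f0 f1 ζ k) := by
  induction k with
  | zero => exact continuous_id
  | succ k ih =>
      have : Continuous (if ζ (k : ℤ) = 0 then f0 else f1) := by
        by_cases hc : ζ (k : ℤ) = 0 <;> simp [hc, h1.cont0, h1.cont1]
      exact this.comp ih

lemma fIter_mono (h1 : H1 f0 f1 df0 df1 d) (ζ : Seq2) (k : ℕ) :
    StrictMono (fIter f0 f1 ζ k) := by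
  induction k with
  | zero => exact strictMono_id
  | succ k ih =>
      have : StrictMono (if ζ (k : ℤ) = 0 then f0 else f1) := by
        by_cases hc : ζ (k : ℤ) = 0 <;> simp [hc, h1.mono0, h1.mono1]
      exact this.comp ih

lemma fIter_hasDeriv (h1 : H1 f0 f1 df0 df1 d) (ζ : Seq2) (k : ℕ) (y : ℝ) :
    HasDerivAt (fIter f0 f1 ζ k) (fIterDeriv f0 f1 df0 df1 ζ k y) y := by
  induction k with
  | zero => exact (hasDerivAt_id y).congr_of_eventuallyEq (Filter.Eventually.of_forall fun x => rfl)
  | succ k ih =>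
      have hg : HasDerivAt (if ζ (k : ℤ) = 0 then f0 else f1)
          ((if ζ (k : ℤ) = 0 then df0 else df1) (fIter f0 f1 ζ k y)) (fIter f0 f1 ζ k y) := by
        by_cases hc : ζ (k : ℤ) = 0 <;> simp [hc, h1.hasDeriv0, h1.hasDeriv1]
      have := hg.comp y ih
      rw [mul_comm] at this
      exact this.congr_of_eventuallyEq (Filter.Eventually.of_forall fun x => rfl)

/-- A bi-infinite good orbit lies in Γ at every time. -/
lemma good_orbit_fIter {ζ : Seq2} {z : ℤ → ℝ}
    (hstep : ∀ t : ℤ, z (t+1) = (if ζ t = 0 then f0 else f1) (z t)) :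
    ∀ (t : ℤ) (k : ℕ), fIter f0 f1 (shiftZ t ζ) k (z t) = z (t + k) := by
  intro t k
  induction k with
  | zero => simp [fIter]
  | succ k ih =>
      rw [fIter_succ, ih, shiftZ_apply]
      have e2 : ((k : ℕ) : ℤ) + t = t + k := by ring
      rw [e2]
      have e : t + ((k + 1 : ℕ) : ℤ) = (t + k) + 1 := by push_cast; ring
      rw [e, hstep (t + k)]

lemma good_orbit_mem_Gamma {ζ : Seq2} {z : ℤ → ℝ}
    (hz01 : ∀ t, z t ∈ Icc (0:ℝ) 1) (hz1 : ∀ t, ζ t = 1 → d ≤ z t)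
    (hstep : ∀ t : ℤ, z (t+1) = (if ζ t = 0 then f0 else f1) (z t)) :
    ∀ t : ℤ, (shiftZ t ζ, z t) ∈ Gamma f0 f1 d := by
  intro t
  constructor
  · intro k
    rw [good_orbit_fIter hstep t k]
    refine ⟨hz01 _, fun h => ?_⟩
    replace h : ζ ((k:ℤ) + t) = 1 := h
    rw [show (k:ℤ) + t = t + k by ring] at h
    exact hz1 _ h
  · refine ⟨fun m => z (t - m), by simp, fun m => ?_⟩
    have e : -(m:ℤ) - 1 + t = t - (m+1) := by ring
    have e2 : t - ((m:ℤ)+1) + 1 = t - m := by ring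
    refine ⟨hz01 _, fun h => ?_, fun h => ?_⟩
    · replace h : ζ (-(m:ℤ) - 1 + t) = 0 := h
      rw [e] at h
      have hs := hstep (t - ((m:ℤ)+1))
      rw [h, if_pos rfl, e2] at hs
      show f0 (z (t - ((m:ℤ)+1))) = z (t - m)
      exact hs.symm
    · replace h : ζ (-(m:ℤ) - 1 + t) = 1 := h
      rw [e] at h
      have hs := hstep (t - ((m:ℤ)+1))
      have h10 : (1 : Fin 2) ≠ 0 := by decide
      rw [h, if_neg h10, e2] at hs
      exact ⟨hz1 _ h, hs.symm⟩

/-- Orbit形 iterate. -/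
lemma good_orbit_F_iter {ζ : Seq2} {z : ℤ → ℝ}
    (hstep : ∀ t : ℤ, z (t+1) = (if ζ t = 0 then f0 else f1) (z t)) (t : ℤ) (k : ℕ) :
    (F f0 f1)^[k] (shiftZ t ζ, z t) = (shiftZ (t + k) ζ, z (t + k)) := by
  rw [F_iterate, good_orbit_fIter hstep, shiftZ_shiftZ]
  rw [add_comm (k : ℤ) t]

/-- Convergence of sequences in Seq2 from eventual coordinatewise equality. -/
lemma tendsto_seq2 {a : ℕ → Seq2} {c : Seq2}
    (h : ∀ j : ℤ, ∀ᶠ k in atTop, a k j = c j) : Tendsto a atTop (nhds c) := by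
  rw [tendsto_pi_nhds]
  intro j
  exact Tendsto.congr' (by filter_upwards [h j] with k hk using hk.symm) tendsto_const_nhds

lemma fixed_of_orbit_tendsto {φ : ℝ → ℝ} (hf : Continuous φ) {u : ℕ → ℝ} {L : ℝ}
    (hu : Tendsto u atTop (nhds L)) (hstep : ∀ k, u (k+1) = φ (u k)) : φ L = L := by
  have h1' : Tendsto (fun k => u (k+1)) atTop (nhds L) := hu.comp (tendsto_add_atTop_nat 1)
  have h2' : Tendsto (fun k => φ (u k)) atTop (nhds (φ L)) :=
    (hf.continuousAt.tendsto).comp hu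
  exact tendsto_nhds_unique (h2'.congr fun k => (hstep k).symm) h1'

/-- A right inverse of f0 on [0,1]. -/
lemma exists_g (h1 : H1 f0 f1 df0 df1 d) :
    ∃ g : ℝ → ℝ, (∀ u ∈ Icc (0:ℝ) 1, g u ∈ Icc (0:ℝ) 1 ∧ f0 (g u) = u) ∧ g 0 = 0 := by
  classical
  refine ⟨fun u => if h : u ∈ Icc (0:ℝ) 1 then (h1.surj0 h).choose else 0, fun u hu => ?_, ?_⟩
  · dsimp only
    rw [dif_pos hu]
    exact ⟨(h1.surj0 hu).choose_spec.1, (h1.surj0 hu).choose_spec.2⟩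
  · dsimp only
    rw [dif_pos (show (0:ℝ) ∈ Icc (0:ℝ) 1 by simp)]
    have h := (h1.surj0 (show (0:ℝ) ∈ Icc (0:ℝ) 1 by simp)).choose_spec
    have := h.2
    have h0 : f0 ((h1.surj0 (show (0:ℝ) ∈ Icc (0:ℝ) 1 by simp)).choose) = f0 0 := by
      rw [this, h1.f0_zero]
    exact h1.mono0.injective h0

end Analytic

lemma fin2_cases (a : Fin 2) : a = 0 ∨ a = 1 := by
  fin_cases a <;> simp

section PerPt

variable {f0 f1 df0 df1 : ℝ → ℝ} {d : ℝ} {ξ : Seq2} {r : ℝ} {n : ℕ}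

/-- Periodicity of the symbol sequence. -/
lemma xi_per (hper : shiftZ n ξ = ξ) (m : ℤ) : ξ (m + n) = ξ m := congrFun hper m

lemma xi_per_mul (hper : shiftZ n ξ = ξ) (m : ℤ) (k : ℕ) : ξ (m + (n:ℤ) * k) = ξ m := by
  induction k with
  | zero => simp
  | succ k ih =>
      have e : m + (n:ℤ) * ((k+1 : ℕ) : ℤ) = (m + (n:ℤ)*k) + n := by push_cast; ring
      rw [e, xi_per hper, ih]

lemma shiftZ_nk (hper : shiftZ n ξ = ξ) (k : ℕ) : shiftZ ((n * k : ℕ) : ℤ) ξ = ξ := by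
  induction k with
  | zero => simp [shiftZ_zero]
  | succ k ih =>
      have e : ((n * (k+1) : ℕ) : ℤ) = ((n*k : ℕ) : ℤ) + (n : ℤ) := by push_cast; ring
      rw [e, ← shiftZ_shiftZ, hper, ih]

lemma fIter_nk_add (hper : shiftZ n ξ = ξ) (k s : ℕ) (y : ℝ) :
    fIter f0 f1 ξ (n * k + s) y = fIter f0 f1 ξ s (fIter f0 f1 ξ (n * k) y) := by
  rw [fIter_add, shiftZ_nk hper]

lemma fIter_nk_fix (hper : shiftZ n ξ = ξ) (hfix : fIter f0 f1 ξ n r = r) (k : ℕ) :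
    fIter f0 f1 ξ (n * k) r = r := by
  induction k with
  | zero => rfl
  | succ k ih =>
      have e : n * (k+1) = n * k + n := by ring
      rw [e, fIter_nk_add hper, ih, hfix]

lemma phi_r_per (hper : shiftZ n ξ = ξ) (hfix : fIter f0 f1 ξ n r = r) (k s : ℕ) :
    fIter f0 f1 ξ (n * k + s) r = fIter f0 f1 ξ s r := by
  rw [fIter_nk_add hper, fIter_nk_fix hper hfix]

end PerPt

section PerPt2

variable {f0 f1 df0 df1 : ℝ → ℝ} {d : ℝ} {ξ : Seq2} {r : ℝ} {n : ℕ}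

/-- Abbreviation for the admissibility package of the periodic point. -/
def AdmR (f0 f1 : ℝ → ℝ) (d : ℝ) (ξ : Seq2) (r : ℝ) : Prop :=
  ∀ t : ℕ, fIter f0 f1 ξ t r ∈ Icc (0:ℝ) 1 ∧ (ξ (t:ℤ) = 1 → d ≤ fIter f0 f1 ξ t r)

lemma exists_one_symb (h1 : H1 f0 f1 df0 df1 d) (h2 : H2 df0 df1 d) (hn : 1 ≤ n)
    (hper : shiftZ n ξ = ξ) (hfix : fIter f0 f1 ξ n r = r) (hadm : AdmR f0 f1 d ξ r)
    (hder : fIterDeriv f0 f1 df0 df1 ξ n r = 1) :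
    ∃ j : ℕ, j < n ∧ ξ (j:ℤ) = 1 := by
  by_contra hc
  push_neg at hc
  have hz : ∀ j : ℕ, j < n → ξ (j:ℤ) = 0 := fun j hj =>
    (fin2_cases (ξ (j:ℤ))).resolve_right (hc j hj)
  -- all symbols are 0
  have hz' : ∀ t : ℕ, ξ (t:ℤ) = 0 := by
    intro t
    induction t using Nat.strong_induction_on with
    | _ t ih =>
        by_cases ht : t < n
        · exact hz t ht
        · push_neg at ht
          have e : ((t:ℕ):ℤ) = ((t - n : ℕ):ℤ) + (n:ℤ) := by omega
          rw [e, xi_per hper]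
          exact ih (t - n) (by omega)
  have hstep : ∀ t : ℕ, fIter f0 f1 ξ (t+1) r = f0 (fIter f0 f1 ξ t r) := by
    intro t; rw [fIter_succ, hz' t, if_pos rfl]
  have hr01 : r ∈ Icc (0:ℝ) 1 := (hadm 0).1
  -- r is a fixed point of an f0-only return map: r ∈ {0,1}
  have hr : r = 0 ∨ r = 1 := by
    by_contra hrc
    push_neg at hrc
    have hro : r ∈ Ioo (0:ℝ) 1 :=
      ⟨lt_of_le_of_ne hr01.1 (Ne.symm hrc.1), lt_of_le_of_ne hr01.2 hrc.2⟩
    have hA : ∀ t : ℕ, fIter f0 f1 ξ t r ∈ Ioo (0:ℝ) 1 := by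
      intro t; induction t with
      | zero => exact hro
      | succ t ih =>
          rw [hstep]
          refine ⟨lt_trans ih.1 (h1.f0_above _ ih), ?_⟩
          have hle := (h1.maps0 ⟨ih.1.le, ih.2.le⟩).2
          rcases eq_or_lt_of_le hle with h|h
          · exfalso
            have : fIter f0 f1 ξ t r = 1 := h1.mono0.injective (by rw [h, h1.f0_one])
            exact absurd this (ne_of_lt ih.2)
          · exact h
    have hB : ∀ t : ℕ, r ≤ fIter f0 f1 ξ t r := by
      intro t; induction t with
      | zero => exact le_refl r
      | succ t ih =>
          rw [hstep]
          exact le_trans ih (h1.f0_ge_id h2 _ ⟨(hA t).1.le, (hA t).2.le⟩)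
    obtain ⟨m, hm⟩ := Nat.exists_eq_add_of_le hn
    have : r < fIter f0 f1 ξ n r := by
      rw [hm, add_comm, hstep]
      calc r ≤ fIter f0 f1 ξ m r := hB m
      _ < f0 (fIter f0 f1 ξ m r) := h1.f0_above _ (hA m)
    rw [hfix] at this; exact lt_irrefl r this
  -- fixed orbit, derivative is a power
  have horb : ∀ t : ℕ, fIter f0 f1 ξ t r = r := by
    intro t; induction t with
    | zero => rfl
    | succ t ih =>
        rw [hstep, ih]
        rcases hr with h|h <;> rw [h]
        · exact h1.f0_zero
        · exact h1.f0_one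
  have hD : ∀ t : ℕ, fIterDeriv f0 f1 df0 df1 ξ t r = (df0 r)^t := by
    intro t; induction t with
    | zero => rfl
    | succ t ih =>
        show fIterDeriv f0 f1 df0 df1 ξ t r *
          (if ξ (t:ℤ) = 0 then df0 else df1) (fIter f0 f1 ξ t r) = _
        rw [hz' t, if_pos rfl, horb t, ih, pow_succ]
  rw [hD n] at hder
  rcases hr with h|h
  · rw [h] at hder
    have : (1:ℝ) < (df0 0)^n := one_lt_pow₀ h1.deriv0_zero (by omega)
    rw [hder] at this; exact lt_irrefl 1 this
  · rw [h] at hder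
    have : (df0 1)^n < 1 := pow_lt_one₀ h1.deriv0_one.1.le h1.deriv0_one.2 (by omega)
    rw [hder] at this; exact lt_irrefl 1 this

lemma exists_zero_symb (h1 : H1 f0 f1 df0 df1 d) (hn : 1 ≤ n)
    (hper : shiftZ n ξ = ξ) (hfix : fIter f0 f1 ξ n r = r) (hadm : AdmR f0 f1 d ξ r) :
    ∃ j : ℕ, j < n ∧ ξ (j:ℤ) = 0 := by
  by_contra hc
  push_neg at hc
  have ho : ∀ j : ℕ, j < n → ξ (j:ℤ) = 1 := fun j hj =>
    (fin2_cases (ξ (j:ℤ))).resolve_left (hc j hj)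
  have key : ∀ t : ℕ, t ≤ n → 1 ≤ t → fIter f0 f1 ξ t r < r := by
    intro t
    induction t with
    | zero => omega
    | succ t ih =>
        intro htn _
        have ht : t < n := by omega
        have hmem : fIter f0 f1 ξ t r ∈ Icc d 1 := ⟨(hadm t).2 (ho t ht), (hadm t).1.2⟩
        have hlt : f1 (fIter f0 f1 ξ t r) < fIter f0 f1 ξ t r := h1.f1_below _ hmem
        have hstep : fIter f0 f1 ξ (t+1) r = f1 (fIter f0 f1 ξ t r) := by
          rw [fIter_succ, ho t ht]; simp
        rcases Nat.eq_zero_or_pos t with h|h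
        · subst h; rw [hstep]; exact hlt
        · rw [hstep]; exact lt_trans hlt (ih (by omega) h)
  have := key n (le_refl n) hn
  rw [hfix] at this; exact lt_irrefl r this

lemma r_pos (h1 : H1 f0 f1 df0 df1 d) (h2 : H2 df0 df1 d) (hn : 1 ≤ n)
    (hper : shiftZ n ξ = ξ) (hfix : fIter f0 f1 ξ n r = r) (hadm : AdmR f0 f1 d ξ r)
    (hder : fIterDeriv f0 f1 df0 df1 ξ n r = 1) : 0 < r := by
  rcases lt_or_eq_of_le (hadm 0).1.1 with h|h
  · exact h
  exfalso
  obtain ⟨j, hjn, hj1⟩ := exists_one_symb h1 h2 hn hper hfix hadm hder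
  have hex : ∃ j : ℕ, ξ (j:ℤ) = 1 := ⟨j, hj1⟩
  classical
  let j0 := Nat.find hex
  have hj0 : ξ (j0:ℤ) = 1 := Nat.find_spec hex
  have hmin : ∀ t < j0, ξ (t:ℤ) = 0 := fun t ht =>
    (fin2_cases _).resolve_right (Nat.find_min hex ht)
  have hzero : ∀ t : ℕ, t ≤ j0 → fIter f0 f1 ξ t r = 0 := by
    intro t
    induction t with
    | zero => intro _; exact h.symm
    | succ t ih =>
        intro hle
        rw [fIter_succ, hmin t (by omega), if_pos rfl, ih (by omega), h1.f0_zero]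
  have := (hadm j0).2 hj0
  rw [hzero j0 (le_refl _)] at this
  exact absurd this (not_le.2 h1.d_mem.1)

lemma r_lt_one (h1 : H1 f0 f1 df0 df1 d) (h2 : H2 df0 df1 d) (hn : 1 ≤ n)
    (hper : shiftZ n ξ = ξ) (hfix : fIter f0 f1 ξ n r = r) (hadm : AdmR f0 f1 d ξ r)
    (hder : fIterDeriv f0 f1 df0 df1 ξ n r = 1) : r < 1 := by
  rcases lt_or_eq_of_le (hadm 0).1.2 with h|h
  · exact h
  exfalso
  replace h : r = 1 := h
  obtain ⟨j, hjn, hj1⟩ := exists_one_symb h1 h2 hn hper hfix hadm hder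
  have h2' : fIter f0 f1 ξ (j+1) r < 1 := by
    rw [fIter_succ, hj1]
    simp only [if_neg (show (1:Fin 2) ≠ 0 by decide)]
    calc f1 (fIter f0 f1 ξ j r) ≤ f1 1 := h1.mono1.le_iff_le.2 (hadm j).1.2
    _ < 1 := h1.f1_one_lt
  have hlt1 : ∀ s : ℕ, fIter f0 f1 ξ (j+1+s) r < 1 := by
    intro s; induction s with
    | zero => exact h2'
    | succ s ih =>
        have e : j+1+(s+1) = (j+1+s)+1 := by ring
        rw [e, fIter_succ]
        by_cases hc : ξ ((j+1+s : ℕ):ℤ) = 0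
        · rw [if_pos hc]
          calc f0 (fIter f0 f1 ξ (j+1+s) r) < f0 1 := h1.mono0 ih
          _ = 1 := h1.f0_one
        · rw [if_neg hc]
          calc f1 (fIter f0 f1 ξ (j+1+s) r) < f1 1 := h1.mono1 ih
          _ < 1 := h1.f1_one_lt
  have hmul : j + 1 ≤ n * (j+1) := by nlinarith
  obtain ⟨s, hs⟩ := Nat.exists_eq_add_of_le hmul
  have := hlt1 s
  rw [← hs, fIter_nk_fix hper hfix (j+1), h] at this
  exact lt_irrefl 1 this

lemma adm_strict (h1 : H1 f0 f1 df0 df1 d) (h2 : H2 df0 df1 d) (hn : 1 ≤ n)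
    (hper : shiftZ n ξ = ξ) (hfix : fIter f0 f1 ξ n r = r) (hadm : AdmR f0 f1 d ξ r)
    (hder : fIterDeriv f0 f1 df0 df1 ξ n r = 1) :
    ∀ t : ℕ, ξ (t:ℤ) = 1 → d < fIter f0 f1 ξ t r := by
  intro t ht
  rcases lt_or_eq_of_le ((hadm t).2 ht) with h|h
  · exact h
  exfalso
  have h0 : fIter f0 f1 ξ (t+1) r = 0 := by
    rw [fIter_succ, ht]
    simp only [if_neg (show (1:Fin 2) ≠ 0 by decide)]
    rw [← h, h1.f1_d]
  obtain ⟨j, hjn, hj1⟩ := exists_one_symb h1 h2 hn hper hfix hadm hder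
  have hC : ∀ s : ℕ, fIter f0 f1 ξ (t+1+s) r ≤ 0 := by
    intro s; induction s with
    | zero => rw [h0]
    | succ s ih =>
        have e : t+1+(s+1) = (t+1+s)+1 := by ring
        rw [e, fIter_succ]
        by_cases hc : ξ ((t+1+s : ℕ):ℤ) = 0
        · rw [if_pos hc]; exact h1.f0_neg ih
        · rw [if_neg hc]
          exact absurd ((hadm (t+1+s)).2 ((fin2_cases _).resolve_left hc))
            (not_le.2 (lt_of_le_of_lt ih h1.d_mem.1))
  -- find a later 1-symbol
  have ht' : ξ ((j + n * (t+1) : ℕ) : ℤ) = 1 := by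
    have e : ((j + n*(t+1) : ℕ) : ℤ) = (j:ℤ) + (n:ℤ)*((t+1 : ℕ):ℤ) := by push_cast; ring
    rw [e, xi_per_mul hper]; exact hj1
  have hge : t + 1 ≤ j + n * (t+1) := by nlinarith
  obtain ⟨s, hs⟩ := Nat.exists_eq_add_of_le hge
  have := (hadm (j + n*(t+1))).2 ht'
  rw [hs] at this
  exact absurd this (not_le.2 (lt_of_le_of_lt (hC s) h1.d_mem.1))

end PerPt2

section PerPt3

variable {f0 f1 df0 df1 : ℝ → ℝ} {d : ℝ} {ξ : Seq2} {r : ℝ} {n : ℕ}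

/-- Constraints up to time `m` for a point `y` (lower-side admissibility). -/
def AdmUpTo (f0 f1 : ℝ → ℝ) (d : ℝ) (ξ : Seq2) (m : ℕ) (y : ℝ) : Prop :=
  ∀ t : ℕ, t < m → 0 ≤ fIter f0 f1 ξ t y ∧ (ξ (t:ℤ) = 1 → d ≤ fIter f0 f1 ξ t y)

/-- Points in `[r,1]` have forward orbits sandwiched between the orbit of `r` and `1`. -/
lemma orbit_up (h1 : H1 f0 f1 df0 df1 d) (hadm : AdmR f0 f1 d ξ r)
    {y : ℝ} (hy1 : r ≤ y) (hy2 : y ≤ 1) :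
    ∀ t : ℕ, fIter f0 f1 ξ t r ≤ fIter f0 f1 ξ t y ∧ fIter f0 f1 ξ t y ≤ 1 := by
  intro t
  induction t with
  | zero => exact ⟨hy1, hy2⟩
  | succ t ih =>
      rw [fIter_succ, fIter_succ]
      by_cases hc : ξ (t:ℤ) = 0
      · rw [if_pos hc]
        exact ⟨h1.mono0.le_iff_le.2 ih.1, by
          calc f0 (fIter f0 f1 ξ t y) ≤ f0 1 := h1.mono0.le_iff_le.2 ih.2
          _ = 1 := h1.f0_one⟩
      · rw [if_neg hc]
        exact ⟨h1.mono1.le_iff_le.2 ih.1, by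
          calc f1 (fIter f0 f1 ξ t y) ≤ f1 1 := h1.mono1.le_iff_le.2 ih.2
          _ ≤ 1 := h1.f1_one_lt.le⟩

/-- Derivative comparison, below the parabolic point. -/
lemma deriv_gt_one (h1 : H1 f0 f1 df0 df1 d) (h2 : H2 df0 df1 d) (hn : 1 ≤ n)
    (hper : shiftZ n ξ = ξ) (hfix : fIter f0 f1 ξ n r = r) (hadm : AdmR f0 f1 d ξ r)
    (hder : fIterDeriv f0 f1 df0 df1 ξ n r = 1)
    {y s : ℝ} (hy : AdmUpTo f0 f1 d ξ n y) (hys : y ≤ s) (hsr : s < r) :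
    1 < fIterDeriv f0 f1 df0 df1 ξ n s := by
  have key : ∀ k : ℕ, k ≤ n →
      (0 < fIterDeriv f0 f1 df0 df1 ξ k r ∧
       fIterDeriv f0 f1 df0 df1 ξ k r ≤ fIterDeriv f0 f1 df0 df1 ξ k s ∧
       ((∃ j : ℕ, j < k ∧ ξ (j:ℤ) = 0) →
         fIterDeriv f0 f1 df0 df1 ξ k r < fIterDeriv f0 f1 df0 df1 ξ k s)) := by
    intro k
    induction k with
    | zero =>
        intro _
        refine ⟨one_pos, le_refl _, fun ⟨j, hj, _⟩ => absurd hj (Nat.not_lt_zero j)⟩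
    | succ k ih =>
        intro hk
        obtain ⟨ihpos, ihle, ihstrict⟩ := ih (by omega)
        have hkn : k < n := by omega
        have hsmono : fIter f0 f1 ξ k s < fIter f0 f1 ξ k r := fIter_mono h1 ξ k hsr
        have hymono : fIter f0 f1 ξ k y ≤ fIter f0 f1 ξ k s :=
          (fIter_mono h1 ξ k).le_iff_le.2 hys
        have hy0 := (hy k hkn).1
        have hr01 := (hadm k).1
        -- factor bounds
        have hfact : (0 < (if ξ (k:ℤ) = 0 then df0 else df1) (fIter f0 f1 ξ k r)) ∧
            ((if ξ (k:ℤ) = 0 then df0 else df1) (fIter f0 f1 ξ k r) ≤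
             (if ξ (k:ℤ) = 0 then df0 else df1) (fIter f0 f1 ξ k s)) ∧
            (ξ (k:ℤ) = 0 → (if ξ (k:ℤ) = 0 then df0 else df1) (fIter f0 f1 ξ k r) <
             (if ξ (k:ℤ) = 0 then df0 else df1) (fIter f0 f1 ξ k s)) := by
          by_cases hc : ξ (k:ℤ) = 0
          · simp only [if_pos hc]
            have hmem_s : fIter f0 f1 ξ k s ∈ Icc (0:ℝ) 1 :=
              ⟨le_trans hy0 hymono, le_trans hsmono.le hr01.2⟩
            exact ⟨h1.df0_pos _ hr01 h2, (h2.1 hmem_s hr01 hsmono).le,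
              fun _ => h2.1 hmem_s hr01 hsmono⟩
          · simp only [if_neg hc]
            have h1sym : ξ (k:ℤ) = 1 := (fin2_cases _).resolve_left hc
            have hds : d ≤ fIter f0 f1 ξ k s := le_trans ((hy k hkn).2 h1sym) hymono
            have hmem_s : fIter f0 f1 ξ k s ∈ Icc d 1 := ⟨hds, le_trans hsmono.le hr01.2⟩
            have hmem_r : fIter f0 f1 ξ k r ∈ Icc d 1 := ⟨(hadm k).2 h1sym, hr01.2⟩
            exact ⟨h1.df1_pos h2 _ hmem_r, h2.2 hmem_s hmem_r hsmono.le,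
              fun habs => absurd habs (by rw [h1sym]; decide)⟩
        show 0 < fIterDeriv f0 f1 df0 df1 ξ k r * _ ∧ _
        refine ⟨mul_pos ihpos hfact.1, ?_, ?_⟩
        · exact mul_le_mul ihle hfact.2.1 hfact.1.le (le_trans ihpos.le ihle)
        · rintro ⟨j, hj, hj0⟩
          by_cases hjk : j < k
          · have h₁ := ihstrict ⟨j, hjk, hj0⟩
            calc fIterDeriv f0 f1 df0 df1 ξ k r *
                  (if ξ (k:ℤ) = 0 then df0 else df1) (fIter f0 f1 ξ k r)
                < fIterDeriv f0 f1 df0 df1 ξ k s *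
                  (if ξ (k:ℤ) = 0 then df0 else df1) (fIter f0 f1 ξ k r) := by
                  exact mul_lt_mul_of_pos_right h₁ hfact.1
              _ ≤ _ := mul_le_mul_of_nonneg_left hfact.2.1
                  (le_trans ihpos.le ihle)
          · have hjek : j = k := by omega
            subst hjek
            have h₂ := hfact.2.2 hj0
            calc fIterDeriv f0 f1 df0 df1 ξ j r *
                  (if ξ (j:ℤ) = 0 then df0 else df1) (fIter f0 f1 ξ j r)
                ≤ fIterDeriv f0 f1 df0 df1 ξ j s *
                  (if ξ (j:ℤ) = 0 then df0 else df1) (fIter f0 f1 ξ j r) :=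
                  mul_le_mul_of_nonneg_right ihle hfact.1.le
              _ < _ := mul_lt_mul_of_pos_left h₂ (lt_of_lt_of_le ihpos ihle)
  obtain ⟨j, hjn, hj0⟩ := exists_zero_symb h1 hn hper hfix hadm
  have := (key n (le_refl n)).2.2 ⟨j, hjn, hj0⟩
  rwa [hder] at this

/-- Derivative comparison, above the parabolic point. -/
lemma deriv_lt_one (h1 : H1 f0 f1 df0 df1 d) (h2 : H2 df0 df1 d) (hn : 1 ≤ n)
    (hper : shiftZ n ξ = ξ) (hfix : fIter f0 f1 ξ n r = r) (hadm : AdmR f0 f1 d ξ r)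
    (hder : fIterDeriv f0 f1 df0 df1 ξ n r = 1)
    {s : ℝ} (hrs : r < s) (hs1 : s ≤ 1) :
    fIterDeriv f0 f1 df0 df1 ξ n s < 1 := by
  have key : ∀ k : ℕ, k ≤ n →
      (0 < fIterDeriv f0 f1 df0 df1 ξ k s ∧
       fIterDeriv f0 f1 df0 df1 ξ k s ≤ fIterDeriv f0 f1 df0 df1 ξ k r ∧
       ((∃ j : ℕ, j < k ∧ ξ (j:ℤ) = 0) →
         fIterDeriv f0 f1 df0 df1 ξ k s < fIterDeriv f0 f1 df0 df1 ξ k r)) := by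
    intro k
    induction k with
    | zero =>
        intro _
        refine ⟨one_pos, le_refl _, fun ⟨j, hj, _⟩ => absurd hj (Nat.not_lt_zero j)⟩
    | succ k ih =>
        intro hk
        obtain ⟨ihpos, ihle, ihstrict⟩ := ih (by omega)
        have hkn : k < n := by omega
        have hsmono : fIter f0 f1 ξ k r < fIter f0 f1 ξ k s := fIter_mono h1 ξ k hrs
        have hup := orbit_up h1 hadm hrs.le hs1 k
        have hr01 := (hadm k).1
        have hfact : (0 < (if ξ (k:ℤ) = 0 then df0 else df1) (fIter f0 f1 ξ k s)) ∧
            ((if ξ (k:ℤ) = 0 then df0 else df1) (fIter f0 f1 ξ k s) ≤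
             (if ξ (k:ℤ) = 0 then df0 else df1) (fIter f0 f1 ξ k r)) ∧
            (ξ (k:ℤ) = 0 → (if ξ (k:ℤ) = 0 then df0 else df1) (fIter f0 f1 ξ k s) <
             (if ξ (k:ℤ) = 0 then df0 else df1) (fIter f0 f1 ξ k r)) := by
          by_cases hc : ξ (k:ℤ) = 0
          · simp only [if_pos hc]
            have hmem_s : fIter f0 f1 ξ k s ∈ Icc (0:ℝ) 1 :=
              ⟨le_trans hr01.1 hsmono.le, hup.2⟩
            exact ⟨h1.df0_pos _ hmem_s h2, (h2.1 hr01 hmem_s hsmono).le,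
              fun _ => h2.1 hr01 hmem_s hsmono⟩
          · simp only [if_neg hc]
            have h1sym : ξ (k:ℤ) = 1 := (fin2_cases _).resolve_left hc
            have hmem_r : fIter f0 f1 ξ k r ∈ Icc d 1 := ⟨(hadm k).2 h1sym, hr01.2⟩
            have hmem_s : fIter f0 f1 ξ k s ∈ Icc d 1 :=
              ⟨le_trans hmem_r.1 hsmono.le, hup.2⟩
            exact ⟨h1.df1_pos h2 _ hmem_s, h2.2 hmem_r hmem_s hsmono.le,
              fun habs => absurd habs (by rw [h1sym]; decide)⟩
        show 0 < fIterDeriv f0 f1 df0 df1 ξ k s * _ ∧ _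
        refine ⟨mul_pos ihpos hfact.1, ?_, ?_⟩
        · exact mul_le_mul ihle hfact.2.1 hfact.1.le (le_trans ihpos.le ihle)
        · rintro ⟨j, hj, hj0⟩
          by_cases hjk : j < k
          · have h₁ := ihstrict ⟨j, hjk, hj0⟩
            calc fIterDeriv f0 f1 df0 df1 ξ k s *
                  (if ξ (k:ℤ) = 0 then df0 else df1) (fIter f0 f1 ξ k s)
                < fIterDeriv f0 f1 df0 df1 ξ k r *
                  (if ξ (k:ℤ) = 0 then df0 else df1) (fIter f0 f1 ξ k s) :=
                  mul_lt_mul_of_pos_right h₁ hfact.1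
              _ ≤ _ := mul_le_mul_of_nonneg_left hfact.2.1 (le_trans ihpos.le ihle)
          · have hjek : j = k := by omega
            subst hjek
            have h₂ := hfact.2.2 hj0
            calc fIterDeriv f0 f1 df0 df1 ξ j s *
                  (if ξ (j:ℤ) = 0 then df0 else df1) (fIter f0 f1 ξ j s)
                ≤ fIterDeriv f0 f1 df0 df1 ξ j r *
                  (if ξ (j:ℤ) = 0 then df0 else df1) (fIter f0 f1 ξ j s) :=
                  mul_le_mul_of_nonneg_right ihle hfact.1.le
              _ < _ := mul_lt_mul_of_pos_left h₂ (lt_of_lt_of_le ihpos ihle)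
  obtain ⟨j, hjn, hj0⟩ := exists_zero_symb h1 hn hper hfix hadm
  have := (key n (le_refl n)).2.2 ⟨j, hjn, hj0⟩
  rwa [hder] at this

/-- Below the parabolic point the return map moves points strictly down. -/
lemma ret_lt_below (h1 : H1 f0 f1 df0 df1 d) (h2 : H2 df0 df1 d) (hn : 1 ≤ n)
    (hper : shiftZ n ξ = ξ) (hfix : fIter f0 f1 ξ n r = r) (hadm : AdmR f0 f1 d ξ r)
    (hder : fIterDeriv f0 f1 df0 df1 ξ n r = 1)
    {y : ℝ} (hy : AdmUpTo f0 f1 d ξ n y) (hyr : y < r) :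
    fIter f0 f1 ξ n y < y := by
  have hmono : StrictMonoOn (fun s => fIter f0 f1 ξ n s - s) (Icc y r) := by
    apply strictMonoOn_of_deriv_pos (convex_Icc y r)
    · exact ((fIter_cont h1 ξ n).sub continuous_id).continuousOn
    · intro s hs
      rw [interior_Icc] at hs
      have hd : HasDerivAt (fun s => fIter f0 f1 ξ n s - s)
          (fIterDeriv f0 f1 df0 df1 ξ n s - 1) s :=
        (fIter_hasDeriv h1 ξ n s).sub (hasDerivAt_id s)
      rw [hd.deriv]
      have := deriv_gt_one h1 h2 hn hper hfix hadm hder hy hs.1.le hs.2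
      linarith
  have := hmono (left_mem_Icc.2 hyr.le) (right_mem_Icc.2 hyr.le) hyr
  simp only [hfix] at this
  linarith

/-- Above the parabolic point the return map moves points strictly down. -/
lemma ret_lt_above (h1 : H1 f0 f1 df0 df1 d) (h2 : H2 df0 df1 d) (hn : 1 ≤ n)
    (hper : shiftZ n ξ = ξ) (hfix : fIter f0 f1 ξ n r = r) (hadm : AdmR f0 f1 d ξ r)
    (hder : fIterDeriv f0 f1 df0 df1 ξ n r = 1)
    {y : ℝ} (hry : r < y) (hy1 : y ≤ 1) :
    fIter f0 f1 ξ n y < y := by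
  have hmono : StrictAntiOn (fun s => fIter f0 f1 ξ n s - s) (Icc r y) := by
    apply strictAntiOn_of_deriv_neg (convex_Icc r y)
    · exact ((fIter_cont h1 ξ n).sub continuous_id).continuousOn
    · intro s hs
      rw [interior_Icc] at hs
      have hd : HasDerivAt (fun s => fIter f0 f1 ξ n s - s)
          (fIterDeriv f0 f1 df0 df1 ξ n s - 1) s :=
        (fIter_hasDeriv h1 ξ n s).sub (hasDerivAt_id s)
      rw [hd.deriv]
      have := deriv_lt_one h1 h2 hn hper hfix hadm hder hs.1 (le_trans hs.2.le hy1)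
      linarith
  have := hmono (left_mem_Icc.2 hry.le) (right_mem_Icc.2 hry.le) hry
  simp only [hfix] at this
  linarith

end PerPt3

section PerPt4

variable {f0 f1 df0 df1 : ℝ → ℝ} {d : ℝ} {ξ : Seq2} {r : ℝ} {n : ℕ}

/-- No point strictly below `r` is forward admissible for all times. -/
lemma no_adm_below (h1 : H1 f0 f1 df0 df1 d) (h2 : H2 df0 df1 d) (hn : 1 ≤ n)
    (hper : shiftZ n ξ = ξ) (hfix : fIter f0 f1 ξ n r = r) (hadm : AdmR f0 f1 d ξ r)
    (hder : fIterDeriv f0 f1 df0 df1 ξ n r = 1)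
    {x : ℝ} (hx : ∀ t : ℕ, 0 ≤ fIter f0 f1 ξ t x ∧ (ξ (t:ℤ) = 1 → d ≤ fIter f0 f1 ξ t x))
    (hxr : x < r) : False := by
  set u : ℕ → ℝ := fun k => fIter f0 f1 ξ (n*k) x with hu
  have hustep : ∀ k, u (k+1) = fIter f0 f1 ξ n (u k) := by
    intro k
    show fIter f0 f1 ξ (n*(k+1)) x = _
    rw [show n*(k+1) = n*k + n by ring, fIter_nk_add hper]
  have huval : ∀ k t : ℕ, fIter f0 f1 ξ t (u k) = fIter f0 f1 ξ (n*k + t) x := by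
    intro k t; rw [fIter_nk_add hper]
  have huadm : ∀ k, AdmUpTo f0 f1 d ξ n (u k) := by
    intro k t _
    rw [huval]
    refine ⟨(hx (n*k+t)).1, fun hsym => (hx (n*k+t)).2 ?_⟩
    have e : ((n*k + t : ℕ):ℤ) = (t:ℤ) + (n:ℤ)*((k:ℕ):ℤ) := by push_cast; ring
    rw [e, xi_per_mul hper]; exact hsym
  have hult : ∀ k, u k < r := by
    intro k
    have := fIter_mono h1 ξ (n*k) hxr
    rwa [fIter_nk_fix hper hfix] at this
  have hanti : Antitone u := by
    apply antitone_nat_of_succ_le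
    intro k
    rw [hustep]
    exact (ret_lt_below h1 h2 hn hper hfix hadm hder (huadm k) (hult k)).le
  have hbdd : BddBelow (Set.range u) := ⟨0, by rintro _ ⟨k, rfl⟩; exact (hx (n*k)).1⟩
  have hlim := tendsto_atTop_ciInf hanti hbdd
  set L := ⨅ k, u k with hL
  have hLfix : fIter f0 f1 ξ n L = L :=
    fixed_of_orbit_tendsto (fIter_cont h1 ξ n) hlim hustep
  have hLr : L < r := lt_of_le_of_lt (ciInf_le hbdd 0) (hult 0)
  have hLadm : AdmUpTo f0 f1 d ξ n L := by
    intro t ht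
    have htt : Tendsto (fun k => fIter f0 f1 ξ t (u k)) atTop (nhds (fIter f0 f1 ξ t L)) :=
      ((fIter_cont h1 ξ t).continuousAt.tendsto).comp hlim
    constructor
    · exact ge_of_tendsto htt (Filter.Eventually.of_forall fun k => by
        rw [huval]; exact (hx (n*k + t)).1)
    · intro hsym
      refine ge_of_tendsto htt (Filter.Eventually.of_forall fun k => ?_)
      rw [huval]
      refine (hx (n*k + t)).2 ?_
      have e : ((n*k + t : ℕ):ℤ) = (t:ℤ) + (n:ℤ)*(k:ℕ) := by push_cast; ring
      rw [e, xi_per_mul hper]; exact hsym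
  have := ret_lt_below h1 h2 hn hper hfix hadm hder hLadm hLr
  rw [hLfix] at this
  exact lt_irrefl L this

/-- The return orbit of `1` decreases to `r`. -/
lemma ret_orbit_one (h1 : H1 f0 f1 df0 df1 d) (h2 : H2 df0 df1 d) (hn : 1 ≤ n)
    (hper : shiftZ n ξ = ξ) (hfix : fIter f0 f1 ξ n r = r) (hadm : AdmR f0 f1 d ξ r)
    (hder : fIterDeriv f0 f1 df0 df1 ξ n r = 1) (hr1 : r < 1) :
    (∀ k, r < fIter f0 f1 ξ (n*k) 1 ∧ fIter f0 f1 ξ (n*k) 1 ≤ 1) ∧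
    Tendsto (fun k => fIter f0 f1 ξ (n*k) 1) atTop (nhds r) := by
  set u : ℕ → ℝ := fun k => fIter f0 f1 ξ (n*k) (1:ℝ) with hu
  have hustep : ∀ k, u (k+1) = fIter f0 f1 ξ n (u k) := by
    intro k
    show fIter f0 f1 ξ (n*(k+1)) (1:ℝ) = _
    rw [show n*(k+1) = n*k + n by ring, fIter_nk_add hper]
  have hmem : ∀ k, r < u k ∧ u k ≤ 1 := by
    intro k
    constructor
    · have hle : r ≤ u k := by
        have := (fIter_mono h1 ξ (n*k)).le_iff_le.2 hr1.le
        rwa [fIter_nk_fix hper hfix] at this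
      rcases lt_or_eq_of_le hle with h|h
      · exact h
      · exfalso
        have : fIter f0 f1 ξ (n*k) r = fIter f0 f1 ξ (n*k) 1 := by
          rw [fIter_nk_fix hper hfix, h]
        have := (fIter_mono h1 ξ (n*k)).injective this
        exact absurd this (ne_of_lt hr1)
    · exact (orbit_up h1 hadm hr1.le (le_refl 1) (n*k)).2
  have hanti : Antitone u := by
    apply antitone_nat_of_succ_le
    intro k
    rw [hustep]
    exact (ret_lt_above h1 h2 hn hper hfix hadm hder (hmem k).1 (hmem k).2).le
  have hbdd : BddBelow (Set.range u) := ⟨r, by rintro _ ⟨k, rfl⟩; exact (hmem k).1.le⟩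
  have hlim := tendsto_atTop_ciInf hanti hbdd
  set L := ⨅ k, u k with hL
  have hLfix : fIter f0 f1 ξ n L = L :=
    fixed_of_orbit_tendsto (fIter_cont h1 ξ n) hlim hustep
  have hLr : r ≤ L := le_ciInf fun k => (hmem k).1.le
  have hL1 : L ≤ 1 := le_trans (ciInf_le hbdd 0) (hmem 0).2
  have hLeq : L = r := by
    rcases lt_or_eq_of_le hLr with h|h
    · exfalso
      have := ret_lt_above h1 h2 hn hper hfix hadm hder h hL1
      rw [hLfix] at this
      exact lt_irrefl L this
    · exact h.symm
  rw [hLeq] at hlim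
  exact ⟨hmem, hlim⟩

end PerPt4

section PConstr

variable {f0 f1 df0 df1 : ℝ → ℝ} {d : ℝ} {ξ : Seq2} {r : ℝ} {n : ℕ}

lemma f0_iterate_mem (h1 : H1 f0 f1 df0 df1 d) {v : ℝ} (hv : v ∈ Icc (0:ℝ) 1) (s : ℕ) :
    f0^[s] v ∈ Icc (0:ℝ) 1 := by
  induction s with
  | zero => exact hv
  | succ s ih => rw [Function.iterate_succ_apply']; exact h1.maps0 ih

lemma F_Pfix (h1 : H1 f0 f1 df0 df1 d) : F f0 f1 Pfix = Pfix := by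
  show (shift zeroSeq, if zeroSeq 0 = 0 then f0 1 else f1 1) = (zeroSeq, 1)
  have h0 : (if zeroSeq 0 = 0 then f0 1 else f1 1) = f0 1 := if_pos rfl
  rw [h0, h1.f0_one]
  rfl

lemma F_Qfix (h1 : H1 f0 f1 df0 df1 d) : F f0 f1 Qfix = Qfix := by
  show (shift zeroSeq, if zeroSeq 0 = 0 then f0 0 else f1 0) = (zeroSeq, 0)
  have h0 : (if zeroSeq 0 = 0 then f0 0 else f1 0) = f0 0 := if_pos rfl
  rw [h0, h1.f0_zero]
  rfl

lemma Ws_subset_WsOrbit {R : Seq2 × ℝ} : Ws f0 f1 d R ⊆ WsOrbit f0 f1 d R := by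
  intro x hx
  exact Set.mem_iUnion.2 ⟨0, by simpa using hx⟩

lemma Wu_subset_WuOrbit {R : Seq2 × ℝ} : Wu f0 f1 d R ⊆ WuOrbit f0 f1 d R := by
  intro x hx
  exact Set.mem_iUnion.2 ⟨0, by simpa using hx⟩

lemma P_point (h1 : H1 f0 f1 df0 df1 d) (h2 : H2 df0 df1 d) (hn : 1 ≤ n)
    (hper : shiftZ n ξ = ξ) (hfix : fIter f0 f1 ξ n r = r) (hadm : AdmR f0 f1 d ξ r)
    (hder : fIterDeriv f0 f1 df0 df1 ξ n r = 1) (N : ℕ) :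
    ∃ Y : Seq2 × ℝ, Y ∈ Ws f0 f1 d Pfix ∩ Wu f0 f1 d Pfix ∧
      (∀ m : ℤ, -((n*(N+1) : ℕ):ℤ) ≤ m → m < ((n*(N+1) : ℕ):ℤ) → Y.1 m = ξ m) ∧
      Y.2 = fIter f0 f1 ξ (n*(N+1)) 1 := by
  have hr1 : r < 1 := r_lt_one h1 h2 hn hper hfix hadm hder
  have hr0 : 0 < r := r_pos h1 h2 hn hper hfix hadm hder
  obtain ⟨B, hB⟩ : ∃ B : ℕ, B = n*(N+1) := ⟨_, rfl⟩
  have hBcast : ((B:ℕ):ℤ) = (n:ℤ)*((N+1:ℕ):ℤ) := by rw [hB]; push_cast; ring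
  have hξB : ∀ m : ℤ, ξ (m + (B:ℤ)) = ξ m := by
    intro m; rw [hBcast]; exact xi_per_mul hper m (N+1)
  set η : Seq2 := fun m => if -((B:ℕ):ℤ) ≤ m ∧ m < ((B:ℕ):ℤ) then ξ m else 0 with hη
  have hη_in : ∀ m : ℤ, -((B:ℕ):ℤ) ≤ m → m < ((B:ℕ):ℤ) → η m = ξ m := by
    intro m hm1 hm2; rw [hη]; exact if_pos ⟨hm1, hm2⟩
  have hη_out : ∀ m : ℤ, (m < -((B:ℕ):ℤ) ∨ ((B:ℕ):ℤ) ≤ m) → η m = 0 := by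
    intro m hm; rw [hη]
    refine if_neg ?_
    rintro ⟨hm1, hm2⟩
    rcases hm with h|h
    · exact absurd hm1 (not_le.2 h)
    · exact absurd hm2 (not_lt.2 h)
  set η' : Seq2 := shiftZ (-((B:ℕ):ℤ)) η with hη'
  have hη's : ∀ s : ℕ, s < 2*B → η' (s:ℤ) = ξ (s:ℤ) := by
    intro s hs
    show η ((s:ℤ) + -((B:ℕ):ℤ)) = ξ (s:ℤ)
    rw [hη_in _ (by omega) (by omega)]
    have := hξB ((s:ℤ) - (B:ℕ))
    rw [sub_add_cancel] at this
    rw [show (s:ℤ) + -((B:ℕ):ℤ) = (s:ℤ) - (B:ℕ) by ring, this]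
  set z : ℤ → ℝ := fun t => if t < -((B:ℕ):ℤ) then 1 else fIter f0 f1 η' (t + B).toNat 1
    with hzdef
  have hz_left : ∀ t : ℤ, t ≤ -((B:ℕ):ℤ) → z t = 1 := by
    intro t ht
    simp only [hzdef]
    by_cases hc : t < -((B:ℕ):ℤ)
    · rw [if_pos hc]
    · rw [if_neg hc]
      have : t = -((B:ℕ):ℤ) := by omega
      rw [this]
      norm_num [fIter]
  have hstep : ∀ t : ℤ, z (t+1) = (if η t = 0 then f0 else f1) (z t) := by
    intro t
    by_cases hc : t < -((B:ℕ):ℤ)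
    · rw [hz_left t (by omega), hz_left (t+1) (by omega), hη_out t (Or.inl hc), if_pos rfl,
        h1.f0_one]
    · push_neg at hc
      have h1' : ¬ (t + 1 < -((B:ℕ):ℤ)) := by omega
      have h2' : ¬ (t < -((B:ℕ):ℤ)) := by omega
      simp only [hzdef]
      simp only [if_neg h1', if_neg h2']
      have e : (t + 1 + B).toNat = (t + B).toNat + 1 := by omega
      rw [e, fIter_succ]
      have e2 : (((t + B).toNat : ℕ) : ℤ) = t + B := by omega
      have e3 : η' (((t + B).toNat : ℕ) : ℤ) = η t := by
        rw [e2]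
        show η (t + (B:ℤ) + -((B:ℕ):ℤ)) = η t
        congr 1
        ring
      rw [e3]
  have hz_mid : ∀ k : ℕ, k ≤ 2*B → z ((k:ℤ) - B) = fIter f0 f1 ξ k 1 := by
    intro k hk
    simp only [hzdef]
    have hc : ¬ ((k:ℤ) - B < -((B:ℕ):ℤ)) := by omega
    rw [if_neg hc]
    have e : ((k:ℤ) - B + B).toNat = k := by omega
    rw [e]
    exact fIter_congr f0 f1 k (fun t ht => hη's t (by omega)) 1
  have hz0 : z 0 = fIter f0 f1 ξ B 1 := by
    have := hz_mid B (by omega)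
    simpa using this
  have hzB : z (B:ℤ) = fIter f0 f1 ξ (2*B) 1 := by
    have := hz_mid (2*B) (le_refl _)
    rw [show ((2*B : ℕ):ℤ) - (B:ℕ) = ((B:ℕ):ℤ) by push_cast; ring] at this
    exact this
  have hz_right : ∀ s : ℕ, z ((B:ℤ) + s) = f0^[s] (z (B:ℤ)) := by
    intro s
    induction s with
    | zero => simp
    | succ s ih =>
        have e : ((B:ℕ):ℤ) + (s+1 : ℕ) = (((B:ℕ):ℤ) + s) + 1 := by push_cast; ring
        rw [e, hstep, hη_out _ (Or.inr (by omega)), if_pos rfl, ih,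
          ← Function.iterate_succ_apply' f0]
  -- bounds
  have horb1 : ∀ k : ℕ, fIter f0 f1 ξ k 1 ∈ Icc (fIter f0 f1 ξ k r) 1 := by
    intro k
    have := orbit_up h1 hadm hr1.le (le_refl 1) k
    exact ⟨this.1, this.2⟩
  have hzB_mem : z (B:ℤ) ∈ Icc (0:ℝ) 1 := by
    rw [hzB]
    exact ⟨le_trans (hadm (2*B)).1.1 (horb1 (2*B)).1, (horb1 (2*B)).2⟩
  have hz01 : ∀ t : ℤ, z t ∈ Icc (0:ℝ) 1 := by
    intro t
    by_cases hc1 : t ≤ -((B:ℕ):ℤ)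
    · rw [hz_left t hc1]; exact ⟨zero_le_one, le_refl 1⟩
    by_cases hc2 : t ≤ (B:ℤ)
    · push_neg at hc1
      have e : t = ((t + B).toNat : ℤ) - B := by omega
      have hk : (t + B).toNat ≤ 2*B := by omega
      rw [e, hz_mid _ hk]
      exact ⟨le_trans (hadm _).1.1 (horb1 _).1, (horb1 _).2⟩
    · push_neg at hc2
      have e : t = (B:ℤ) + ((t - B).toNat : ℕ) := by omega
      rw [e, hz_right]
      exact f0_iterate_mem h1 hzB_mem _
  have hz1 : ∀ t : ℤ, η t = 1 → d ≤ z t := by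
    intro t ht
    have hin : -((B:ℕ):ℤ) ≤ t ∧ t < ((B:ℕ):ℤ) := by
      by_contra hc
      rw [hη_out t (by omega)] at ht
      exact absurd ht (by decide)
    have e : t = ((t + B).toNat : ℤ) - B := by omega
    have hk : (t + B).toNat ≤ 2*B := by omega
    rw [e, hz_mid _ hk]
    have hsym : ξ (((t + B).toNat : ℕ):ℤ) = 1 := by
      rw [show (((t + B).toNat : ℕ):ℤ) = t + (B:ℤ) by omega, hξB]
      rw [hη_in t hin.1 hin.2] at ht
      exact ht
    calc d ≤ fIter f0 f1 ξ ((t + B).toNat) r := (hadm _).2 hsym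
    _ ≤ _ := (horb1 _).1
  -- membership of the whole orbit in Γ
  have hΓ : ∀ t : ℤ, (shiftZ t η, z t) ∈ Gamma f0 f1 d :=
    good_orbit_mem_Gamma hz01 hz1 hstep
  refine ⟨(η, z 0), ⟨⟨?_, ?_⟩, ?_⟩, ?_, ?_⟩
  · -- forward orbit in Γ
    intro k
    have := good_orbit_F_iter hstep 0 k
    rw [shiftZ_zero, zero_add] at this
    rw [this]
    exact hΓ k
  · -- forward tendsto P
    have hfwd : ∀ k : ℕ, (F f0 f1)^[k] (η, z 0) = (shiftZ k η, z k) := by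
      intro k
      have := good_orbit_F_iter hstep 0 k
      rwa [shiftZ_zero, zero_add] at this
    rw [show nhds Pfix = nhds (zeroSeq, (1:ℝ)) from rfl]
    have hseq : Tendsto (fun k : ℕ => shiftZ k η) atTop (nhds zeroSeq) := by
      apply tendsto_seq2
      intro j
      rw [eventually_atTop]
      refine ⟨((B:ℤ) - j).toNat, fun k hk => ?_⟩
      show η (j + k) = zeroSeq j
      rw [hη_out _ (Or.inr (by omega))]
      rfl
    have hfib : Tendsto (fun k : ℕ => z k) atTop (nhds 1) := by
      have hzBpos : 0 < z (B:ℤ) := by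
        have h' := (horb1 (2*B)).1
        have e : 2*B = n*(2*(N+1)) := by rw [hB]; ring
        rw [e, fIter_nk_fix hper hfix] at h'
        rw [hzB, e]
        linarith
      have hlim := h1.f0_iter_tendsto_one h2 hzBpos hzB_mem.2
      have hcomp : Tendsto (fun k : ℕ => f0^[k - B] (z (B:ℤ))) atTop (nhds 1) :=
        hlim.comp (tendsto_sub_atTop_nat B)
      refine hcomp.congr' ?_
      rw [eventuallyEq_iff_exists_mem]
      refine ⟨{k | B ≤ k}, eventually_atTop.2 ⟨B, fun k hk => hk⟩, fun k hk => ?_⟩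
      show f0^[k - B] (z (B:ℤ)) = z k
      have e : (k:ℤ) = (B:ℤ) + ((k - B : ℕ):ℕ) := by
        have : (B:ℕ) ≤ k := hk
        push_cast; omega
      rw [e, hz_right]
    have := hseq.prodMk_nhds hfib
    refine Tendsto.congr (fun k => ?_) this
    exact (hfwd k).symm
  · -- unstable set of P
    refine ⟨fun m => (shiftZ (-(m:ℤ)) η, z (-(m:ℤ))), by simp [shiftZ_zero], fun m => ?_, ?_⟩
    · refine ⟨hΓ _, ?_⟩
      have := good_orbit_F_iter hstep (-(m+1:ℕ):ℤ) 1
      rw [show (-(m+1:ℕ):ℤ) + (1:ℕ) = -(m:ℤ) by push_cast; ring] at this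
      simpa [F_iterate] using this
    · rw [show nhds Pfix = nhds (zeroSeq, (1:ℝ)) from rfl]
      have hseq : Tendsto (fun m : ℕ => shiftZ (-(m:ℤ)) η) atTop (nhds zeroSeq) := by
        apply tendsto_seq2
        intro j
        rw [eventually_atTop]
        refine ⟨(j + (B:ℤ)).toNat + 1, fun m hm => ?_⟩
        show η (j + -(m:ℤ)) = zeroSeq j
        rw [hη_out _ (Or.inl (by omega))]
        rfl
      have hfib : Tendsto (fun m : ℕ => z (-(m:ℤ))) atTop (nhds 1) := by
        refine Tendsto.congr' ?_ tendsto_const_nhds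
        rw [eventuallyEq_iff_exists_mem]
        refine ⟨{m | (B:ℕ) ≤ m}, eventually_atTop.2 ⟨B, fun m hm => hm⟩, fun m hm => ?_⟩
        have hm' : (B:ℕ) ≤ m := hm
        show (1:ℝ) = z (-(m:ℤ))
        rw [hz_left _ (by omega)]
      exact hseq.prodMk_nhds hfib
  · -- closeness of the symbol sequence
    intro m hm1 hm2
    rw [← hB] at hm1 hm2
    exact hη_in m hm1 hm2
  · rw [hz0, hB]

end PConstr

section PAssemble

variable {f0 f1 df0 df1 : ℝ → ℝ} {d : ℝ} {ξ : Seq2} {r : ℝ} {n : ℕ}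

lemma mem_homClass_P (h1 : H1 f0 f1 df0 df1 d) (h2 : H2 df0 df1 d) (hn : 1 ≤ n)
    (hper : shiftZ n ξ = ξ) (hfix : fIter f0 f1 ξ n r = r) (hadm : AdmR f0 f1 d ξ r)
    (hder : fIterDeriv f0 f1 df0 df1 ξ n r = 1) :
    ((ξ, r) : Seq2 × ℝ) ∈ homClass f0 f1 d Pfix := by
  have hr1 : r < 1 := r_lt_one h1 h2 hn hper hfix hadm hder
  choose Y hY1 hY2 hY3 using P_point h1 h2 hn hper hfix hadm hder
  have hseq : Tendsto (fun N => (Y N).1) atTop (nhds ξ) := by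
    apply tendsto_seq2
    intro j
    rw [eventually_atTop]
    refine ⟨j.natAbs, fun N hN => ?_⟩
    have hb : j.natAbs < n*(N+1) :=
      Nat.lt_of_lt_of_le (by omega) (Nat.le_mul_of_pos_left _ (by omega))
    exact hY2 N j (by omega) (by omega)
  have hfib : Tendsto (fun N => (Y N).2) atTop (nhds r) := by
    have := (ret_orbit_one h1 h2 hn hper hfix hadm hder hr1).2.comp
      (tendsto_add_atTop_nat 1)
    refine Tendsto.congr (fun N => ?_) this
    exact (hY3 N).symm
  have htend : Tendsto Y atTop (nhds ((ξ, r) : Seq2 × ℝ)) := by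
    rw [nhds_prod_eq]
    exact hseq.prodMk hfib
  apply mem_closure_of_tendsto htend
  refine Filter.Eventually.of_forall (fun N => ?_)
  exact ⟨Ws_subset_WsOrbit (hY1 N).1, Wu_subset_WuOrbit (hY1 N).2⟩

end PAssemble

section QPrep

variable {f0 f1 df0 df1 : ℝ → ℝ} {d : ℝ} {ξ : Seq2} {r : ℝ} {n : ℕ}

/-- Forward orbits stay nonnegative as long as the `d`-constraints held so far. -/
lemma phi_nonneg (h1 : H1 f0 f1 df0 df1 d) (hadm : AdmR f0 f1 d ξ r)
    {x : ℝ} (h0 : 0 ≤ x) (hxr : x ≤ r) :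
    ∀ t : ℕ, (∀ s : ℕ, s < t → (ξ (s:ℤ) = 1 → d ≤ fIter f0 f1 ξ s x)) →
      0 ≤ fIter f0 f1 ξ t x := by
  intro t
  induction t with
  | zero => intro _; exact h0
  | succ t ih =>
      intro hc
      have hnn : 0 ≤ fIter f0 f1 ξ t x := ih (fun s hs => hc s (by omega))
      have hub : fIter f0 f1 ξ t x ≤ 1 := by
        calc fIter f0 f1 ξ t x ≤ fIter f0 f1 ξ t r := (fIter_mono h1 ξ t).le_iff_le.2 hxr
        _ ≤ 1 := (hadm t).1.2
      rw [fIter_succ]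
      by_cases hsym : ξ (t:ℤ) = 0
      · rw [if_pos hsym]
        exact (h1.maps0 ⟨hnn, hub⟩).1
      · rw [if_neg hsym]
        have h1s : ξ (t:ℤ) = 1 := (fin2_cases _).resolve_left hsym
        have hd : d ≤ fIter f0 f1 ξ t x := hc t (by omega) h1s
        calc (0:ℝ) = f1 d := (h1.f1_d).symm
        _ ≤ f1 (fIter f0 f1 ξ t x) := h1.mono1.le_iff_le.2 hd
        _ = _ := rfl

/-- The exact-hit point: arbitrarily close to `r` from below, its orbit meets `d`
exactly at a 1-symbol at a late time. -/
lemma Q_exact_hit (h1 : H1 f0 f1 df0 df1 d) (h2 : H2 df0 df1 d) (hn : 1 ≤ n)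
    (hper : shiftZ n ξ = ξ) (hfix : fIter f0 f1 ξ n r = r) (hadm : AdmR f0 f1 d ξ r)
    (hder : fIterDeriv f0 f1 df0 df1 ξ n r = 1) (T : ℕ) {ε : ℝ} (hε : 0 < ε) :
    ∃ (x : ℝ) (t : ℕ), r - ε < x ∧ 0 < x ∧ x < r ∧ T ≤ t ∧ ξ (t:ℤ) = 1 ∧
      fIter f0 f1 ξ t x = d ∧
      (∀ s : ℕ, s < t → (ξ (s:ℤ) = 1 → d ≤ fIter f0 f1 ξ s x)) ∧
      (∀ s : ℕ, s ≤ t → fIter f0 f1 ξ s x ∈ Icc (0:ℝ) 1) := by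
  classical
  have hr0 : 0 < r := r_pos h1 h2 hn hper hfix hadm hder
  -- an eventual neighborhood where the first `T` constraints are strict
  have hev : ∀ᶠ x in nhds r, ∀ s ∈ Finset.range T, (ξ (s:ℤ) = 1 → d < fIter f0 f1 ξ s x) := by
    rw [eventually_all_finset]
    intro s _
    by_cases hsym : ξ (s:ℤ) = 1
    · have hlt : d < fIter f0 f1 ξ s r := adm_strict h1 h2 hn hper hfix hadm hder s hsym
      have := (fIter_cont h1 ξ s).continuousAt (x := r) |>.eventually_mem
        (IsOpen.mem_nhds isOpen_Ioi hlt)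
      filter_upwards [this] with x hx _
      exact hx
    · filter_upwards with x hx
      exact absurd hx hsym
  rw [Metric.eventually_nhds_iff] at hev
  obtain ⟨δ, hδ, hball⟩ := hev
  set m : ℝ := min δ (min ε r) with hm
  have hm0 : 0 < m := lt_min hδ (lt_min hε hr0)
  set x₀ : ℝ := r - m/2 with hx₀
  have hx₀r : x₀ < r := by rw [hx₀]; linarith
  have hx₀pos : 0 < x₀ := by
    have : m ≤ r := le_trans (min_le_right _ _) (min_le_right _ _)
    rw [hx₀]; linarith
  have hx₀ε : r - ε < x₀ := by
    have : m ≤ ε := le_trans (min_le_right _ _) (min_le_left _ _)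
    rw [hx₀]; linarith
  have hx₀T : ∀ s : ℕ, s < T → (ξ (s:ℤ) = 1 → d < fIter f0 f1 ξ s x₀) := by
    intro s hs
    have hdist : dist x₀ r < δ := by
      rw [hx₀, Real.dist_eq]
      have : m ≤ δ := min_le_left _ _
      rw [abs_of_nonpos (by linarith)]
      linarith
    exact hball hdist s (Finset.mem_range.2 hs)
  -- the constraints must eventually fail
  have hfail : ∃ t : ℕ, ξ (t:ℤ) = 1 ∧ fIter f0 f1 ξ t x₀ < d := by
    by_contra hcon
    push_neg at hcon
    have hall : ∀ t : ℕ, ξ (t:ℤ) = 1 → d ≤ fIter f0 f1 ξ t x₀ := fun t ht => hcon t ht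
    have hx : ∀ t : ℕ, 0 ≤ fIter f0 f1 ξ t x₀ ∧ (ξ (t:ℤ) = 1 → d ≤ fIter f0 f1 ξ t x₀) := by
      intro t
      exact ⟨phi_nonneg h1 hadm hx₀pos.le hx₀r.le t (fun s _ => hall s), fun ht => hall t ht⟩
    exact no_adm_below h1 h2 hn hper hfix hadm hder hx hx₀r
  set t₀ := Nat.find hfail with ht₀
  obtain ⟨ht₀1, ht₀lt⟩ := Nat.find_spec hfail
  have hmin : ∀ s : ℕ, s < t₀ → (ξ (s:ℤ) = 1 → d ≤ fIter f0 f1 ξ s x₀) := by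
    intro s hs hsym
    by_contra hc
    exact absurd ⟨hsym, not_le.1 hc⟩ (Nat.find_min hfail hs)
  have hT : T ≤ t₀ := by
    by_contra hc
    push_neg at hc
    exact absurd ht₀lt (not_lt.2 (hx₀T t₀ hc ht₀1).le)
  -- intermediate value
  have hrstrict : d < fIter f0 f1 ξ t₀ r := adm_strict h1 h2 hn hper hfix hadm hder t₀ ht₀1
  have hIVT := intermediate_value_Ioo (le_of_lt hx₀r) (fIter_cont h1 ξ t₀).continuousOn
  have hd_mem : d ∈ Ioo (fIter f0 f1 ξ t₀ x₀) (fIter f0 f1 ξ t₀ r) := ⟨ht₀lt, hrstrict⟩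
  obtain ⟨x, hx_mem, hx_eq⟩ := hIVT hd_mem
  have hxcons : ∀ s : ℕ, s < t₀ → (ξ (s:ℤ) = 1 → d ≤ fIter f0 f1 ξ s x) := by
    intro s hs hsym
    calc d ≤ fIter f0 f1 ξ s x₀ := hmin s hs hsym
    _ ≤ fIter f0 f1 ξ s x := (fIter_mono h1 ξ s).le_iff_le.2 hx_mem.1.le
  refine ⟨x, t₀, lt_trans hx₀ε hx_mem.1, lt_trans hx₀pos hx_mem.1, hx_mem.2, hT, ht₀1,
    hx_eq, hxcons, ?_⟩
  intro s hs
  constructor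
  · exact phi_nonneg h1 hadm (lt_trans hx₀pos hx_mem.1).le hx_mem.2.le s
      (fun s' hs' => hxcons s' (by omega))
  · calc fIter f0 f1 ξ s x ≤ fIter f0 f1 ξ s r := (fIter_mono h1 ξ s).le_iff_le.2 hx_mem.2.le
    _ ≤ 1 := (hadm s).1.2

/-- Backward `g`-orbits tend to 0. -/
lemma g_orbit_tendsto (h1 : H1 f0 f1 df0 df1 d) (h2 : H2 df0 df1 d) {g : ℝ → ℝ}
    (hg : ∀ u ∈ Icc (0:ℝ) 1, g u ∈ Icc (0:ℝ) 1 ∧ f0 (g u) = u)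
    {v : ℝ} (hv0 : 0 ≤ v) (hv1 : v < 1) :
    (∀ i, g^[i] v ∈ Icc (0:ℝ) 1 ∧ g^[i] v < 1) ∧
      Tendsto (fun i => g^[i] v) atTop (nhds 0) := by
  have hmem : ∀ i, g^[i] v ∈ Icc (0:ℝ) 1 ∧ g^[i] v < 1 := by
    intro i
    induction i with
    | zero => exact ⟨⟨hv0, hv1.le⟩, hv1⟩
    | succ i ih =>
        rw [Function.iterate_succ_apply']
        refine ⟨(hg _ ih.1).1, ?_⟩
        rcases lt_or_eq_of_le (hg _ ih.1).1.2 with h|h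
        · exact h
        · exfalso
          have := (hg _ ih.1).2
          rw [h, h1.f0_one] at this
          exact absurd this.symm (ne_of_lt ih.2)
  have hanti : Antitone (fun i => g^[i] v) := by
    apply antitone_nat_of_succ_le
    intro i
    rw [Function.iterate_succ_apply']
    by_contra hc
    push_neg at hc
    have h' : f0 (g^[i] v) < f0 (g (g^[i] v)) := h1.mono0 hc
    rw [(hg _ (hmem i).1).2] at h'
    have h'' : g^[i] v ≤ f0 (g^[i] v) := h1.f0_ge_id h2 _ (hmem i).1
    linarith
  have hbdd : BddBelow (Set.range (fun i => g^[i] v)) :=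
    ⟨0, by rintro _ ⟨i, rfl⟩; exact (hmem i).1.1⟩
  have hlim := tendsto_atTop_ciInf hanti hbdd
  set L := ⨅ i, g^[i] v with hL
  have hfixL : f0 L = L := by
    have h1' : Tendsto (fun i => g^[i+1] v) atTop (nhds L) := hlim.comp (tendsto_add_atTop_nat 1)
    have h2' : Tendsto (fun i => f0 (g^[i+1] v)) atTop (nhds (f0 L)) :=
      ((h1.cont0).continuousAt.tendsto).comp h1'
    refine tendsto_nhds_unique (h2'.congr fun i => ?_) hlim
    rw [Function.iterate_succ_apply', (hg _ (hmem i).1).2]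
  have hL0 : 0 ≤ L := le_ciInf fun i => (hmem i).1.1
  have hL1 : L < 1 := lt_of_le_of_lt (ciInf_le hbdd 0) hv1
  rcases h1.f0_fixed ⟨hL0, hL1.le⟩ hfixL with h|h
  · rw [h] at hlim; exact ⟨hmem, hlim⟩
  · exact absurd h (ne_of_lt hL1)

end QPrep

section QChain

variable {f0 f1 df0 df1 : ℝ → ℝ} {d : ℝ} {ξ : Seq2} {r : ℝ} {n : ℕ}

lemma Q_chain (h1 : H1 f0 f1 df0 df1 d) (h2 : H2 df0 df1 d) (hn : 1 ≤ n)
    (hper : shiftZ n ξ = ξ) (hfix : fIter f0 f1 ξ n r = r) (hadm : AdmR f0 f1 d ξ r)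
    (hder : fIterDeriv f0 f1 df0 df1 ξ n r = 1)
    {x : ℝ} (hx0 : 0 < x) (hxr : x < r)
    (hcons : ∀ s : ℕ, s < n → (ξ (s:ℤ) = 1 → d ≤ fIter f0 f1 ξ s x)) (K : ℕ) :
    ∃ v : ℝ, x ≤ v ∧ v < r ∧ fIter f0 f1 ξ (n*K) v = x ∧
      (∀ s : ℕ, s ≤ n*K → 0 ≤ fIter f0 f1 ξ s v ∧ fIter f0 f1 ξ s v ≤ 1 ∧
        (ξ (s:ℤ) = 1 → d ≤ fIter f0 f1 ξ s v)) := by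
  have hnn : ∀ s : ℕ, s < n → 0 ≤ fIter f0 f1 ξ s x := fun s hs =>
    phi_nonneg h1 hadm hx0.le hxr.le s (fun s' hs' => hcons s' (lt_trans hs' hs))
  have hstep : ∀ v : ℝ, x ≤ v → v < r → ∃ v', v < v' ∧ v' < r ∧ fIter f0 f1 ξ n v' = v := by
    intro v hxv hvr
    have hAdm : AdmUpTo f0 f1 d ξ n v := by
      intro s hs
      have hmono := (fIter_mono h1 ξ s).le_iff_le.2 hxv
      exact ⟨le_trans (hnn s hs) hmono, fun h => le_trans (hcons s hs h) hmono⟩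
    have hret : fIter f0 f1 ξ n v < v := ret_lt_below h1 h2 hn hper hfix hadm hder hAdm hvr
    have hIVT := intermediate_value_Ioo hvr.le (fIter_cont h1 ξ n).continuousOn
    have hv_mem : v ∈ Ioo (fIter f0 f1 ξ n v) (fIter f0 f1 ξ n r) := by
      rw [hfix]; exact ⟨hret, hvr⟩
    obtain ⟨v', hv'm, hv'eq⟩ := hIVT hv_mem
    exact ⟨v', hv'm.1, hv'm.2, hv'eq⟩
  induction K with
  | zero =>
      refine ⟨x, le_refl x, hxr, by simp [fIter], ?_⟩
      intro s hs
      have hs0 : s = 0 := by omega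
      subst hs0
      exact ⟨hx0.le, le_trans hxr.le (hadm 0).1.2, fun h => hcons 0 (by omega) h⟩
  | succ K ih =>
      obtain ⟨v, hxv, hvr, hvK, hbound⟩ := ih
      obtain ⟨v', hvv', hv'r, hv'eq⟩ := hstep v hxv hvr
      refine ⟨v', le_trans hxv hvv'.le, hv'r, ?_, ?_⟩
      · have e : n*(K+1) = n + n*K := by ring
        rw [e, fIter_add, hper, hv'eq, hvK]
      · intro s hs
        by_cases hsn : s < n
        · have hmono := (fIter_mono h1 ξ s).le_iff_le.2 (le_trans hxv hvv'.le)
          have hub : fIter f0 f1 ξ s v' ≤ 1 := by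
            calc fIter f0 f1 ξ s v' ≤ fIter f0 f1 ξ s r :=
              (fIter_mono h1 ξ s).le_iff_le.2 hv'r.le
            _ ≤ 1 := (hadm s).1.2
          exact ⟨le_trans (hnn s hsn) hmono, hub, fun h => le_trans (hcons s hsn h) hmono⟩
        · push_neg at hsn
          obtain ⟨s', hs'⟩ := Nat.exists_eq_add_of_le hsn
          have e : n*(K+1) = n + n*K := by ring
          have hs'le : s' ≤ n*K := by omega
          have he : fIter f0 f1 ξ s v' = fIter f0 f1 ξ s' v := by
            rw [hs', fIter_add, hper, hv'eq]
          have hsym : ξ (s:ℤ) = ξ (s':ℤ) := by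
            rw [hs']
            have hp := xi_per hper (s':ℤ)
            rw [show ((n + s' : ℕ):ℤ) = (s':ℤ) + (n:ℤ) by push_cast; ring]
            exact hp
          obtain ⟨hb1, hb2, hb3⟩ := hbound s' hs'le
          refine ⟨by rw [he]; exact hb1, by rw [he]; exact hb2, fun h => ?_⟩
          rw [he]
          exact hb3 (by rw [← hsym]; exact h)

end QChain

section QConstr

variable {f0 f1 df0 df1 : ℝ → ℝ} {d : ℝ} {ξ : Seq2} {r : ℝ} {n : ℕ}

lemma Q_point (h1 : H1 f0 f1 df0 df1 d) (h2 : H2 df0 df1 d) (hn : 1 ≤ n)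
    (hper : shiftZ n ξ = ξ) (hfix : fIter f0 f1 ξ n r = r) (hadm : AdmR f0 f1 d ξ r)
    (hder : fIterDeriv f0 f1 df0 df1 ξ n r = 1) (N : ℕ) :
    ∃ Y : Seq2 × ℝ, Y ∈ Ws f0 f1 d Qfix ∩ Wu f0 f1 d Qfix ∧
      (∀ m : ℤ, -((n*(N+1) : ℕ):ℤ) ≤ m → m ≤ ((n*(N+1) : ℕ):ℤ) → Y.1 m = ξ m) ∧
      r - 1/(N+1) < Y.2 ∧ Y.2 < r := by
  classical
  have hr1 : r < 1 := r_lt_one h1 h2 hn hper hfix hadm hder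
  have hε : (0:ℝ) < 1/(N+1) := by positivity
  obtain ⟨x, t₀, hxε, hx0, hxr, hT, ht₀sym, ht₀eq, hxcons, hxmem⟩ :=
    Q_exact_hit h1 h2 hn hper hfix hadm hder (n*(N+1)) hε
  have hnt₀ : n*(N+1) ≤ t₀ := hT
  have hn_le : n ≤ t₀ := le_trans (Nat.le_mul_of_pos_right n (by omega)) hnt₀
  obtain ⟨v, hxv, hvr, hvB, hvbound⟩ := Q_chain h1 h2 hn hper hfix hadm hder hx0 hxr
    (fun s hs hsym => hxcons s (lt_of_lt_of_le hs hn_le) hsym) (N+1)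
  obtain ⟨g, hg, hg0⟩ := exists_g h1
  have hv01 : 0 ≤ v ∧ v < 1 := ⟨le_trans hx0.le hxv, lt_trans hvr hr1⟩
  have hgpack := g_orbit_tendsto h1 h2 hg hv01.1 hv01.2
  obtain ⟨B, hBdef⟩ : ∃ B : ℕ, B = n*(N+1) := ⟨_, rfl⟩
  have hBfix : fIter f0 f1 ξ B v = x := by rw [hBdef]; exact hvB
  have hBle : B ≤ t₀ := by rw [hBdef]; exact hnt₀
  have hξB : ∀ m : ℤ, ξ (m + (B:ℤ)) = ξ m := by
    intro m
    rw [show ((B:ℕ):ℤ) = (n:ℤ)*((N+1:ℕ):ℤ) by rw [hBdef]; push_cast; ring]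
    exact xi_per_mul hper m (N+1)
  have hshiftB : shiftZ ((B:ℕ):ℤ) ξ = ξ := by rw [hBdef]; exact shiftZ_nk hper (N+1)
  have hafter : ∀ w : ℕ, fIter f0 f1 ξ (B + w) v = fIter f0 f1 ξ w x := by
    intro w
    rw [fIter_add, hshiftB, hBfix]
  have hval0 : fIter f0 f1 ξ (t₀+1) x = 0 := by
    rw [fIter_succ, ht₀sym]
    simp only [if_neg (show (1:Fin 2) ≠ 0 by decide)]
    rw [ht₀eq, h1.f1_d]
  set ζ : Seq2 := fun m => if -((B:ℕ):ℤ) ≤ m ∧ m ≤ (t₀:ℤ) then ξ m else 0 with hζ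
  have hζ_in : ∀ m : ℤ, -((B:ℕ):ℤ) ≤ m → m ≤ (t₀:ℤ) → ζ m = ξ m := by
    intro m hm1 hm2; rw [hζ]; exact if_pos ⟨hm1, hm2⟩
  have hζ_out : ∀ m : ℤ, (m < -((B:ℕ):ℤ) ∨ (t₀:ℤ) < m) → ζ m = 0 := by
    intro m hm; rw [hζ]
    refine if_neg ?_
    rintro ⟨hm1, hm2⟩
    rcases hm with h|h
    · exact absurd hm1 (not_le.2 h)
    · exact absurd hm2 (not_le.2 h)
  set z : ℤ → ℝ := fun t => if t < -((B:ℕ):ℤ) then g^[(-((B:ℕ):ℤ) - t).toNat] v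
    else if t ≤ (t₀:ℤ)+1 then fIter f0 f1 ξ (t + B).toNat v else 0 with hzdef
  have hz_left : ∀ t : ℤ, t ≤ -((B:ℕ):ℤ) → z t = g^[(-((B:ℕ):ℤ) - t).toNat] v := by
    intro t ht
    simp only [hzdef]
    by_cases hc : t < -((B:ℕ):ℤ)
    · rw [if_pos hc]
    · have he : t = -((B:ℕ):ℤ) := by omega
      rw [if_neg hc, if_pos (by omega : t ≤ (t₀:ℤ)+1), he]
      norm_num [fIter]
  have hz_mid : ∀ t : ℤ, -((B:ℕ):ℤ) ≤ t → t ≤ (t₀:ℤ)+1 → z t = fIter f0 f1 ξ (t + B).toNat v := by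
    intro t ht1 ht2
    simp only [hzdef]
    rw [if_neg (by omega), if_pos ht2]
  have hz_right : ∀ t : ℤ, (t₀:ℤ)+1 ≤ t → z t = 0 := by
    intro t ht
    by_cases hc : t = (t₀:ℤ)+1
    · subst hc
      rw [hz_mid _ (by omega) (le_refl _)]
      have e : ((t₀:ℤ)+1+B).toNat = B + (t₀+1) := by omega
      rw [e, hafter, hval0]
    · simp only [hzdef]
      rw [if_neg (by omega), if_neg (by omega)]
  have hz0 : z 0 = x := by
    rw [hz_mid 0 (by omega) (by omega)]
    simpa using hBfix
  -- the step relation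
  have hstep : ∀ t : ℤ, z (t+1) = (if ζ t = 0 then f0 else f1) (z t) := by
    intro t
    by_cases hc : t < -((B:ℕ):ℤ)
    · rw [hζ_out t (Or.inl hc), if_pos rfl, hz_left t (by omega), hz_left (t+1) (by omega)]
      have e : (-((B:ℕ):ℤ) - t).toNat = (-((B:ℕ):ℤ) - (t+1)).toNat + 1 := by omega
      rw [e, Function.iterate_succ_apply' g]
      exact ((hg _ (hgpack.1 _).1).2).symm
    · push_neg at hc
      by_cases hc2 : t ≤ (t₀:ℤ)
      · rw [hζ_in t hc hc2, hz_mid t hc (by omega), hz_mid (t+1) (by omega) (by omega)]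
        have e : (t+1+B).toNat = (t+B).toNat + 1 := by omega
        rw [e, fIter_succ]
        have e2 : ξ (((t + B).toNat : ℕ) : ℤ) = ξ t := by
          rw [show (((t + B).toNat : ℕ):ℤ) = t + (B:ℤ) by omega, hξB]
        rw [e2]
      · push_neg at hc2
        rw [hζ_out t (Or.inr hc2), if_pos rfl, hz_right t (by omega), hz_right (t+1) (by omega),
          h1.f0_zero]
  -- bounds
  have hz01 : ∀ t : ℤ, z t ∈ Icc (0:ℝ) 1 := by
    intro t
    by_cases hc : t < -((B:ℕ):ℤ)
    · rw [hz_left t hc.le]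
      exact (hgpack.1 _).1
    · push_neg at hc
      by_cases hc2 : t ≤ (t₀:ℤ)+1
      · rw [hz_mid t hc hc2]
        by_cases hsB : (t + B).toNat ≤ B
        · have hb := hvbound ((t + B).toNat) (hBdef ▸ hsB)
          exact ⟨hb.1, hb.2.1⟩
        · push_neg at hsB
          obtain ⟨w, hw⟩ := Nat.exists_eq_add_of_le hsB.le
          have hwle : w ≤ t₀+1 := by omega
          rw [hw, hafter]
          by_cases hwt : w ≤ t₀
          · exact hxmem w hwt
          · have hw1 : w = t₀+1 := by omega
            rw [hw1, hval0]
            norm_num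
      · push_neg at hc2
        rw [hz_right t (by omega)]
        norm_num
  have hz1 : ∀ t : ℤ, ζ t = 1 → d ≤ z t := by
    intro t ht
    have hin : -((B:ℕ):ℤ) ≤ t ∧ t ≤ (t₀:ℤ) := by
      by_contra hcon
      rw [hζ_out t (by omega)] at ht
      exact absurd ht (by decide)
    have hξt : ξ t = 1 := by rw [← hζ_in t hin.1 hin.2]; exact ht
    rw [hz_mid t hin.1 (by omega)]
    have hsym : ξ (((t + B).toNat : ℕ):ℤ) = 1 := by
      rw [show (((t + B).toNat : ℕ):ℤ) = t + (B:ℤ) by omega, hξB]; exact hξt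
    by_cases hsB : (t + B).toNat ≤ B
    · exact (hvbound _ (hBdef ▸ hsB)).2.2 hsym
    · push_neg at hsB
      obtain ⟨w, hw⟩ := Nat.exists_eq_add_of_le hsB.le
      have hwt : w ≤ t₀ := by omega
      rw [hw, hafter]
      by_cases hwlt : w < t₀
      · refine hxcons w hwlt ?_
        have e3 : ((w:ℕ):ℤ) = (t + (B:ℤ)) - (B:ℤ) := by omega
        rw [e3, add_sub_cancel_right]
        exact hξt
      · have hw1 : w = t₀ := by omega
        rw [hw1, ht₀eq]
  have hΓ : ∀ t : ℤ, (shiftZ t ζ, z t) ∈ Gamma f0 f1 d :=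
    good_orbit_mem_Gamma hz01 hz1 hstep
  refine ⟨(ζ, z 0), ⟨⟨?_, ?_⟩, ?_⟩, ?_, ?_, ?_⟩
  · -- forward orbit in Γ
    intro k
    have := good_orbit_F_iter hstep 0 k
    rw [shiftZ_zero, zero_add] at this
    rw [this]
    exact hΓ k
  · -- forward tendsto Q
    have hfwd : ∀ k : ℕ, (F f0 f1)^[k] (ζ, z 0) = (shiftZ k ζ, z k) := by
      intro k
      have := good_orbit_F_iter hstep 0 k
      rwa [shiftZ_zero, zero_add] at this
    rw [show nhds Qfix = nhds (zeroSeq, (0:ℝ)) from rfl]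
    have hseq : Tendsto (fun k : ℕ => shiftZ k ζ) atTop (nhds zeroSeq) := by
      apply tendsto_seq2
      intro j
      rw [eventually_atTop]
      refine ⟨((t₀:ℤ) + 1 - j).toNat, fun k hk => ?_⟩
      show ζ (j + k) = zeroSeq j
      rw [hζ_out _ (Or.inr (by omega))]
      rfl
    have hfib : Tendsto (fun k : ℕ => z k) atTop (nhds 0) := by
      refine Tendsto.congr' ?_ tendsto_const_nhds
      rw [eventuallyEq_iff_exists_mem]
      refine ⟨{k | t₀ + 1 ≤ k}, eventually_atTop.2 ⟨t₀+1, fun k hk => hk⟩, fun k hk => ?_⟩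
      have hk' : t₀ + 1 ≤ k := hk
      show (0:ℝ) = z k
      rw [hz_right _ (by omega)]
    have := hseq.prodMk_nhds hfib
    refine Tendsto.congr (fun k => ?_) this
    exact (hfwd k).symm
  · -- unstable set of Q
    refine ⟨fun m => (shiftZ (-(m:ℤ)) ζ, z (-(m:ℤ))), by simp [shiftZ_zero], fun m => ?_, ?_⟩
    · refine ⟨hΓ _, ?_⟩
      have := good_orbit_F_iter hstep (-(m+1:ℕ):ℤ) 1
      rw [show (-(m+1:ℕ):ℤ) + (1:ℕ) = -(m:ℤ) by push_cast; ring] at this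
      simpa [F_iterate] using this
    · rw [show nhds Qfix = nhds (zeroSeq, (0:ℝ)) from rfl]
      have hseq : Tendsto (fun m : ℕ => shiftZ (-(m:ℤ)) ζ) atTop (nhds zeroSeq) := by
        apply tendsto_seq2
        intro j
        rw [eventually_atTop]
        refine ⟨(j + (B:ℤ)).toNat + 1, fun m hm => ?_⟩
        show ζ (j + -(m:ℤ)) = zeroSeq j
        rw [hζ_out _ (Or.inl (by omega))]
        rfl
      have hfib : Tendsto (fun m : ℕ => z (-(m:ℤ))) atTop (nhds 0) := by
        have hcomp : Tendsto (fun m : ℕ => g^[m - B] v) atTop (nhds 0) :=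
          hgpack.2.comp (tendsto_sub_atTop_nat B)
        refine hcomp.congr' ?_
        rw [eventuallyEq_iff_exists_mem]
        refine ⟨{m | B ≤ m}, eventually_atTop.2 ⟨B, fun m hm => hm⟩, fun m hm => ?_⟩
        have hm' : (B:ℕ) ≤ m := hm
        show g^[m - B] v = z (-(m:ℤ))
        rw [hz_left _ (by omega)]
        congr 1
        omega
      exact hseq.prodMk_nhds hfib
  · -- closeness of the symbol sequence
    intro m hm1 hm2
    rw [← hBdef] at hm1 hm2
    exact hζ_in m hm1 (by omega)
  · rw [hz0]; exact hxε
  · rw [hz0]; exact hxr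

end QConstr

section QAssemble

variable {f0 f1 df0 df1 : ℝ → ℝ} {d : ℝ} {ξ : Seq2} {r : ℝ} {n : ℕ}

lemma mem_homClass_Q (h1 : H1 f0 f1 df0 df1 d) (h2 : H2 df0 df1 d) (hn : 1 ≤ n)
    (hper : shiftZ n ξ = ξ) (hfix : fIter f0 f1 ξ n r = r) (hadm : AdmR f0 f1 d ξ r)
    (hder : fIterDeriv f0 f1 df0 df1 ξ n r = 1) :
    ((ξ, r) : Seq2 × ℝ) ∈ homClass f0 f1 d Qfix := by
  choose Y hY1 hY2 hY3 hY4 using Q_point h1 h2 hn hper hfix hadm hder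
  have hseq : Tendsto (fun N => (Y N).1) atTop (nhds ξ) := by
    apply tendsto_seq2
    intro j
    rw [eventually_atTop]
    refine ⟨j.natAbs, fun N hN => ?_⟩
    have hb : j.natAbs < n*(N+1) :=
      Nat.lt_of_lt_of_le (by omega) (Nat.le_mul_of_pos_left _ (by omega))
    exact hY2 N j (by omega) (by omega)
  have hlow : Tendsto (fun N : ℕ => r - 1/(N+1 : ℝ)) atTop (nhds r) := by
    have h0 : Tendsto (fun N : ℕ => 1/(N+1 : ℝ)) atTop (nhds 0) :=
      tendsto_one_div_add_atTop_nhds_zero_nat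
    have := Filter.Tendsto.sub (tendsto_const_nhds : Tendsto (fun _ : ℕ => r) atTop (nhds r)) h0
    simpa using this
  have hfib : Tendsto (fun N => (Y N).2) atTop (nhds r) :=
    tendsto_of_tendsto_of_tendsto_of_le_of_le hlow tendsto_const_nhds
      (fun N => (hY3 N).le) (fun N => (hY4 N).le)
  have htend : Tendsto Y atTop (nhds ((ξ, r) : Seq2 × ℝ)) := by
    rw [nhds_prod_eq]
    exact hseq.prodMk hfib
  apply mem_closure_of_tendsto htend
  refine Filter.Eventually.of_forall (fun N => ?_)
  exact ⟨Ws_subset_WsOrbit (hY1 N).1, Wu_subset_WuOrbit (hY1 N).2⟩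

end QAssemble
/-! ## Statement 12 -/

theorem statement_12 (f0 f1 df0 df1 : ℝ → ℝ) (d : ℝ) (hH1 : H1 f0 f1 df0 df1 d)
    (hH2 : H2 df0 df1 d) :
    (∀ X : Seq2 × ℝ, IsParPerPt f0 f1 df0 df1 d X →
      X ∈ homClass f0 f1 d Pfix ∩ homClass f0 f1 d Qfix) ∧
    ((∃ X : Seq2 × ℝ, IsParPerPt f0 f1 df0 df1 d X) →
      (homClass f0 f1 d Pfix ∩ homClass f0 f1 d Qfix).Nonempty) := by
  have main : ∀ X : Seq2 × ℝ, IsParPerPt f0 f1 df0 df1 d X →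
      X ∈ homClass f0 f1 d Pfix ∩ homClass f0 f1 d Qfix := by
    rintro ⟨ξ, r⟩ ⟨n, ⟨hΓ, hn, hperX⟩, hder⟩
    have hit : (shiftZ n ξ, fIter f0 f1 ξ n r) = ((ξ, r) : Seq2 × ℝ) :=
      (F_iterate f0 f1 ξ r n).symm.trans hperX
    have hper : shiftZ n ξ = ξ := congrArg Prod.fst hit
    have hfix : fIter f0 f1 ξ n r = r := congrArg Prod.snd hit
    have hadm : AdmR f0 f1 d ξ r := hΓ.1
    have hder' : fIterDeriv f0 f1 df0 df1 ξ n r = 1 := hder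
    exact ⟨mem_homClass_P hH1 hH2 hn hper hfix hadm hder',
      mem_homClass_Q hH1 hH2 hn hper hfix hadm hder'⟩
  exact ⟨main, fun ⟨X, hX⟩ => ⟨X, main X hX⟩⟩

end DGR
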